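/- arXiv:1806.07091 — 7 statements merged into one kernel-verified Lean document; each statement's English description precedes it below -/
import Mathlib

section
/- There exist absolute constants C > 0 and c > 0 such that the following holds. Let G be an abelian group, let A ⊆ G be a finite set with |A| ≥ 2, and let d ≥ 1 be a real number such that E_4^+(A, B) ≤ d · |A| · |B|^3 for every nonempty finite set B ⊆ G. Then |A − A|^{35} · d^{13} ≥ C · |A|^{48} / (log |A|)^c. -/
open Finset
open scoped Pointwise

/-- The representation function `r_{A−B}(x) = #{(a,b) ∈ A × B : x = a − b}`. -/
def rSub {G : Type*} [AddCommGroup G] [DecidableEq G] (A B : Finset G) (x : G) : ℕ :=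
  ((A ×ˢ B).filter fun ab => ab.1 - ab.2 = x).card

/-- The fourth order additive energy `E_4^+(A,B) = Σ_x r_{A−B}(x)^4`; the summand is
supported on the difference set `A − B`. -/
def E4 {G : Type*} [AddCommGroup G] [DecidableEq G] (A B : Finset G) : ℕ :=
  ∑ x ∈ A - B, (rSub A B x) ^ 4


namespace DSLB

variable {G : Type} [AddCommGroup G] [DecidableEq G]

/-- fiber set A ∩ (A+s) as a filter -/
def Afib (A : Finset G) (s : G) : Finset G := A.filter fun a => a - s ∈ A

lemma Afib_subset (A : Finset G) (s : G) : Afib A s ⊆ A := filter_subset _ _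

lemma card_Afib (A : Finset G) (s : G) : (Afib A s).card = rSub A A s := by
  rw [rSub, Afib]
  apply Finset.card_bij (fun a _ => (a, a - s))
  · intro a ha
    simp only [mem_filter] at ha ⊢
    exact ⟨mem_product.mpr ⟨ha.1, ha.2⟩, by abel⟩
  · intro a ha b hb h
    simpa using congrArg Prod.fst h
  · rintro ⟨a, b⟩ hab
    simp only [mem_filter, mem_product] at hab
    refine ⟨a, ?_, ?_⟩
    · simp only [mem_filter]
      obtain ⟨⟨h1, h2⟩, h3⟩ := hab
      refine ⟨h1, ?_⟩
      have : a - s = b := by rw [← h3]; abel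
      rwa [this]
    · obtain ⟨⟨h1, h2⟩, h3⟩ := hab
      have : a - s = b := by rw [← h3]; abel
      rw [this]

lemma sum_rSub (A B : Finset G) : ∑ x ∈ A - B, rSub A B x = A.card * B.card := by
  rw [← Finset.card_product]
  rw [Finset.card_eq_sum_card_fiberwise (f := fun p : G × G => p.1 - p.2) (t := A - B)
    (fun p hp => by rw [mem_coe, mem_product] at hp; exact Finset.sub_mem_sub hp.1 hp.2)]
  rfl

end DSLB

namespace DSLB
variable {G : Type} [AddCommGroup G] [DecidableEq G]

def quad (A B : Finset G) : Finset ((G × G) × (G × G)) :=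
  ((A ×ˢ B) ×ˢ (A ×ˢ B)).filter fun p => p.1.1 - p.1.2 = p.2.1 - p.2.2

lemma sum_rSub_sq (A B : Finset G) :
    ∑ x ∈ A - B, (rSub A B x) ^ 2 = (quad A B).card := by
  rw [Finset.card_eq_sum_card_fiberwise (f := fun p : (G × G) × (G × G) => p.1.1 - p.1.2)
    (t := A - B) (fun p hp => by
      simp only [mem_coe, quad, mem_filter, mem_product] at hp
      exact Finset.sub_mem_sub hp.1.1.1 hp.1.1.2)]
  refine Finset.sum_congr rfl fun x hx => ?_
  have : (quad A B).filter (fun p => p.1.1 - p.1.2 = x) =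
      ((A ×ˢ B).filter fun ab => ab.1 - ab.2 = x) ×ˢ
      ((A ×ˢ B).filter fun ab => ab.1 - ab.2 = x) := by
    ext ⟨⟨a, b⟩, ⟨c, e⟩⟩
    simp only [quad, mem_filter, mem_product]
    constructor
    · rintro ⟨⟨⟨⟨h1, h2⟩, h3, h4⟩, h5⟩, h6⟩
      exact ⟨⟨⟨h1, h2⟩, h6⟩, ⟨⟨h3, h4⟩, by rw [← h5, h6]⟩⟩
    · rintro ⟨⟨⟨h1, h2⟩, h3⟩, ⟨⟨h4, h5⟩, h6⟩⟩
      exact ⟨⟨⟨⟨h1, h2⟩, h4, h5⟩, by rw [h3, h6]⟩, h3⟩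
  rw [this, Finset.card_product, rSub, sq]

def trip (A : Finset G) : Finset ((G × G) × ((G × G) × (G × G))) :=
  ((A ×ˢ A) ×ˢ ((A ×ˢ A) ×ˢ (A ×ˢ A))).filter fun p =>
    p.1.1 - p.1.2 = p.2.1.1 - p.2.1.2 ∧ p.1.1 - p.1.2 = p.2.2.1 - p.2.2.2

lemma sum_rSub_cube (A : Finset G) :
    ∑ x ∈ A - A, (rSub A A x) ^ 3 = (trip A).card := by
  rw [Finset.card_eq_sum_card_fiberwise
    (f := fun p : (G × G) × ((G × G) × (G × G)) => p.1.1 - p.1.2)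
    (t := A - A) (fun p hp => by
      simp only [mem_coe, trip, mem_filter, mem_product] at hp
      exact Finset.sub_mem_sub hp.1.1.1 hp.1.1.2)]
  refine Finset.sum_congr rfl fun x hx => ?_
  have : (trip A).filter (fun p => p.1.1 - p.1.2 = x) =
      ((A ×ˢ A).filter fun ab => ab.1 - ab.2 = x) ×ˢ
      (((A ×ˢ A).filter fun ab => ab.1 - ab.2 = x) ×ˢ
       ((A ×ˢ A).filter fun ab => ab.1 - ab.2 = x)) := by
    ext ⟨⟨a, b⟩, ⟨⟨c, e⟩, ⟨u, v⟩⟩⟩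
    simp only [trip, mem_filter, mem_product]
    constructor
    · rintro ⟨⟨⟨⟨h1, h2⟩, ⟨h3, h4⟩, h5, h6⟩, h7, h8⟩, h9⟩
      exact ⟨⟨⟨h1, h2⟩, h9⟩, ⟨⟨⟨h3, h4⟩, by rw [← h7, h9]⟩, ⟨⟨h5, h6⟩, by rw [← h8, h9]⟩⟩⟩
    · rintro ⟨⟨⟨h1, h2⟩, h3⟩, ⟨⟨⟨h4, h5⟩, h6⟩, ⟨⟨h7, h8⟩, h9⟩⟩⟩
      exact ⟨⟨⟨⟨h1, h2⟩, ⟨h4, h5⟩, h7, h8⟩, by rw [h3, h6], by rw [h3, h9]⟩, h3⟩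
  rw [this, Finset.card_product, Finset.card_product, rSub]
  ring

end DSLB

namespace DSLB
variable {G : Type} [AddCommGroup G] [DecidableEq G]

lemma sum_quad_Afib_le (A : Finset G) (S : Finset G) :
    ∑ s ∈ S, (quad A (Afib A s)).card ≤ (trip A).card := by
  rw [← Finset.card_sigma]
  apply Finset.card_le_card_of_injOn
    (fun x => ((x.2.1.1, x.2.2.1), ((x.2.1.2, x.2.2.2), (x.2.1.2 - x.1, x.2.2.2 - x.1))))
  · rintro ⟨s, ⟨⟨a, b⟩, ⟨c, e⟩⟩⟩ hx
    simp only [mem_coe, mem_sigma, quad, trip, Afib, mem_filter, mem_product] at hx ⊢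
    obtain ⟨hS, ⟨⟨ha, hb, hbs⟩, hc, he, hes⟩, heq⟩ := hx
    have h1 : a - c = b - e := sub_eq_sub_iff_sub_eq_sub.mp heq
    refine ⟨⟨⟨ha, hc⟩, ⟨hb, he⟩, hbs, hes⟩, h1, ?_⟩
    rw [h1]; abel
  · rintro ⟨s, ⟨⟨a, b⟩, ⟨c, e⟩⟩⟩ hx ⟨t, ⟨⟨a', b'⟩, ⟨c', e'⟩⟩⟩ hy h
    simp only [Prod.mk.injEq] at h
    obtain ⟨⟨rfl, rfl⟩, ⟨rfl, rfl⟩, h5, h6⟩ := h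
    have hst : s = t := sub_right_inj.mp h5
    subst hst
    rfl

end DSLB

namespace DSLB
variable {G : Type} [AddCommGroup G] [DecidableEq G]

lemma sum_r_rho_le (A : Finset G) (S : Finset G) :
    ∑ s ∈ S, (rSub A A s) * (A - Afib A s).card ≤ (quad A (A - A)).card := by
  have hcard : ∀ s : G, rSub A A s * (A - Afib A s).card =
      ((((A ×ˢ A).filter fun p => p.1 - p.2 = s)) ×ˢ (A - Afib A s)).card := by
    intro s; rw [Finset.card_product]; rfl
  simp_rw [hcard, ← Finset.card_sigma]
  apply Finset.card_le_card_of_injOn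
    (fun x => ((x.2.1.2, x.2.2), (x.2.1.1, x.2.2 + x.1)))
  · rintro ⟨s, ⟨⟨a, a'⟩, w⟩⟩ hx
    simp only [mem_coe, mem_sigma, mem_product, mem_filter] at hx
    obtain ⟨hS, ⟨⟨ha, ha'⟩, hfib⟩, hw⟩ := hx
    have hw' : w ∈ A - A := Finset.sub_subset_sub (Finset.Subset.refl A) (Afib_subset A s) hw
    have hws : w + s ∈ A - A := by
      rw [Finset.mem_sub] at hw
      obtain ⟨α, hα, β, hβ, hαβ⟩ := hw
      rw [Afib, mem_filter] at hβ
      exact Finset.mem_sub.mpr ⟨α, hα, β - s, hβ.2, by rw [← hαβ]; abel⟩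
    simp only [mem_coe, quad, mem_filter, mem_product]
    refine ⟨⟨⟨ha', hw'⟩, ha, hws⟩, ?_⟩
    subst hfib
    abel
  · rintro ⟨s, ⟨⟨a, a'⟩, w⟩⟩ hx ⟨t, ⟨⟨b, b'⟩, v⟩⟩ hy h
    simp only [Prod.mk.injEq] at h
    obtain ⟨⟨rfl, rfl⟩, rfl, h4⟩ := h
    have hst : s = t := by
      have := add_right_inj (a := w) |>.mp h4
      exact this
    subst hst
    rfl

end DSLB

namespace DSLB
variable {G : Type} [AddCommGroup G] [DecidableEq G]

lemma pigeon {α : Type} [DecidableEq α] (S : Finset α) (w κ : α → ℕ) (J : ℕ)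
    (hκ : ∀ s ∈ S, κ s < J) (hJ : 0 < J) :
    ∃ j, ∑ s ∈ S, w s ≤ J * ∑ s ∈ S.filter (fun s => κ s = j), w s := by
  obtain ⟨j, hj, hmax⟩ := Finset.exists_max_image (Finset.range J)
    (fun j => ∑ s ∈ S.filter (fun s => κ s = j), w s) ⟨0, Finset.mem_range.mpr hJ⟩
  refine ⟨j, ?_⟩
  calc ∑ s ∈ S, w s
      = ∑ j' ∈ Finset.range J, ∑ s ∈ S.filter (fun s => κ s = j'), w s :=
        (Finset.sum_fiberwise_of_maps_to (fun s hs => Finset.mem_range.mpr (hκ s hs)) w).symm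
    _ ≤ ∑ _j' ∈ Finset.range J, ∑ s ∈ S.filter (fun s => κ s = j), w s :=
        Finset.sum_le_sum fun i hi => hmax i hi
    _ = J * ∑ s ∈ S.filter (fun s => κ s = j), w s := by
        rw [Finset.sum_const, Finset.card_range, smul_eq_mul]

/-- Cauchy–Schwarz with 1: `(∑ f)² ≤ |S| ∑ f²`, natural numbers. -/
lemma cs_one {α : Type} (S : Finset α) (f : α → ℕ) :
    (∑ x ∈ S, f x) ^ 2 ≤ S.card * ∑ x ∈ S, (f x) ^ 2 := by
  have h := Finset.sum_mul_sq_le_sq_mul_sq S (fun _ => (1 : ℝ)) (fun x => (f x : ℝ))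
  simp only [one_mul, one_pow, Finset.sum_const, nsmul_eq_mul, mul_one] at h
  exact_mod_cast h

/-- `(∑ f³)² ≤ (∑ f²)(∑ f⁴)`, natural numbers. -/
lemma cs_34 {α : Type} (S : Finset α) (f : α → ℕ) :
    (∑ x ∈ S, (f x) ^ 3) ^ 2 ≤ (∑ x ∈ S, (f x) ^ 2) * ∑ x ∈ S, (f x) ^ 4 := by
  have h := Finset.sum_mul_sq_le_sq_mul_sq S (fun x => (f x : ℝ)) (fun x => (f x : ℝ) ^ 2)
  have e1 : ∀ x, (f x : ℝ) * (f x : ℝ) ^ 2 = (f x : ℝ) ^ 3 := by intro x; ring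
  have e2 : ∀ x, ((f x : ℝ) ^ 2) ^ 2 = (f x : ℝ) ^ 4 := by intro x; ring
  simp_rw [e1, e2] at h
  exact_mod_cast h

/-- `(∑ f²)² ≤ (∑ f)(∑ f³)` for `f : ℕ`, via square roots. -/
lemma cs_23 {α : Type} (S : Finset α) (f : α → ℕ) :
    (∑ x ∈ S, (f x) ^ 2) ^ 2 ≤ (∑ x ∈ S, f x) * ∑ x ∈ S, (f x) ^ 3 := by
  have h := Finset.sum_mul_sq_le_sq_mul_sq S (fun x => Real.sqrt (f x))
    (fun x => Real.sqrt (f x) * (f x : ℝ))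
  have e1 : ∀ x, Real.sqrt (f x) * (Real.sqrt (f x) * (f x : ℝ)) = (f x : ℝ) ^ 2 := by
    intro x
    rw [← mul_assoc, Real.mul_self_sqrt (by positivity)]
    ring
  have e2 : ∀ x, (Real.sqrt (f x)) ^ 2 = (f x : ℝ) := fun x => Real.sq_sqrt (by positivity)
  have e3 : ∀ x, (Real.sqrt (f x) * (f x : ℝ)) ^ 2 = (f x : ℝ) ^ 3 := by
    intro x
    rw [mul_pow, Real.sq_sqrt (by positivity)]
    ring
  simp_rw [e1, e2, e3] at h
  exact_mod_cast h

end DSLB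


set_option maxHeartbeats 2000000 in
open DSLB in
/-- **Small energy implies large difference set.** If `E_4^+(A,B) ≤ d |A| |B|^3` for all
nonempty `B` (i.e. `d_4^+(A) ≤ d`), then `|A−A|^35 d^13 ≥ C |A|^48 / (log |A|)^c`. -/
theorem diffset_lower_bound_of_small_energy :
    ∃ C : ℝ, 0 < C ∧ ∃ c : ℝ, 0 < c ∧
      ∀ (G : Type) [AddCommGroup G] [DecidableEq G] (A : Finset G) (d : ℝ),
        2 ≤ A.card → 1 ≤ d →
        (∀ B : Finset G, B.Nonempty →
          (E4 A B : ℝ) ≤ d * (A.card : ℝ) * (B.card : ℝ) ^ (3 : ℕ)) →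
        C * (A.card : ℝ) ^ (48 : ℕ) / Real.log (A.card : ℝ) ^ c ≤
          ((A - A).card : ℝ) ^ (35 : ℕ) * d ^ (13 : ℕ) := by
  refine ⟨((2 : ℝ) ^ 12 * 30 ^ 36)⁻¹, by positivity, 72, by norm_num, ?_⟩
  intro G _ _ A d hn2 hd hyp
  set n := A.card with hn
  have hAne : A.Nonempty := Finset.card_pos.mp (by omega)
  have hDne : (A - A).Nonempty := hAne.sub hAne
  set K := (A - A).card with hK
  have hK1 : 1 ≤ K := Finset.card_pos.mpr hDne
  have hKn2 : K ≤ n * n := by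
    rw [hK, Finset.sub_def]
    exact le_trans (Finset.card_image_le) (le_of_eq (Finset.card_product A A))
  -- positivity of r on D
  have hr_pos : ∀ s ∈ A - A, 1 ≤ rSub A A s := by
    intro s hs
    rw [Finset.mem_sub] at hs
    obtain ⟨a, ha, b, hb, hab⟩ := hs
    exact Finset.card_pos.mpr ⟨(a, b), Finset.mem_filter.mpr
      ⟨Finset.mem_product.mpr ⟨ha, hb⟩, hab⟩⟩
  have hr_le : ∀ s : G, rSub A A s ≤ n := by
    intro s
    rw [← card_Afib]
    exact Finset.card_le_card (Afib_subset A s)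
  -- first pigeonhole
  set J := Nat.log 2 n + 1 with hJ
  obtain ⟨j, hj⟩ := pigeon (A - A) (rSub A A) (fun s => Nat.log 2 (rSub A A s)) J
    (fun s _ => Nat.lt_succ_of_le (Nat.log_mono_right (hr_le s)))
    (by omega)
  set P := (A - A).filter (fun s => Nat.log 2 (rSub A A s) = j) with hP
  set Δ := 2 ^ j with hΔ
  have hΔ1 : 1 ≤ Δ := Nat.one_le_two_pow
  have hsum1 : n * n ≤ J * ∑ s ∈ P, rSub A A s := by
    rw [← sum_rSub A A]; exact hj
  have hΔle : ∀ s ∈ P, Δ ≤ rSub A A s := by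
    intro s hs
    rw [hP, Finset.mem_filter] at hs
    have h0 : rSub A A s ≠ 0 := by have := hr_pos s hs.1; omega
    have := Nat.pow_log_le_self 2 h0
    rwa [hs.2] at this
  have hΔge : ∀ s ∈ P, rSub A A s ≤ 2 * Δ := by
    intro s hs
    rw [hP, Finset.mem_filter] at hs
    have := Nat.lt_pow_succ_log_self (by norm_num : 1 < 2) (rSub A A s)
    rw [hs.2] at this
    rw [hΔ]
    calc rSub A A s ≤ 2 ^ (j + 1) := le_of_lt this
      _ = 2 * 2 ^ j := by ring
  -- second pigeonhole
  set J' := Nat.log 2 K + 1 with hJ'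
  have hρs_le : ∀ s : G, (A - Afib A s).card ≤ K := by
    intro s
    exact Finset.card_le_card (Finset.sub_subset_sub (Finset.Subset.refl A) (Afib_subset A s))
  obtain ⟨i, hi⟩ := pigeon P (fun _ => 1) (fun s => Nat.log 2 ((A - Afib A s).card)) J'
    (fun s _ => Nat.lt_succ_of_le (Nat.log_mono_right (hρs_le s)))
    (by omega)
  set P'' := P.filter (fun s => Nat.log 2 ((A - Afib A s).card) = i) with hP''
  set ρ := 2 ^ i with hρ
  have hρ1 : 1 ≤ ρ := Nat.one_le_two_pow
  set M := P''.card with hM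
  have hcard1 : P.card ≤ J' * M := by
    have h1 : ∑ s ∈ P, (1 : ℕ) = P.card := by simp
    have h2 : ∑ s ∈ P'', (1 : ℕ) = M := by simp [hM]
    rw [← h1]
    calc ∑ s ∈ P, (1:ℕ) ≤ J' * ∑ s ∈ P'', (1:ℕ) := hi
      _ = J' * M := by rw [h2]
  have hρle : ∀ s ∈ P'', ρ ≤ (A - Afib A s).card := by
    intro s hs
    rw [hP'', Finset.mem_filter] at hs
    have hne : (A - Afib A s).Nonempty := by
      refine hAne.sub ?_
      rw [← Finset.card_pos, card_Afib]
      have := hΔle s hs.1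
      omega
    have h0 : (A - Afib A s).card ≠ 0 := by have := Finset.card_pos.mpr hne; omega
    have := Nat.pow_log_le_self 2 h0
    rwa [hs.2] at this
  have hρge : ∀ s ∈ P'', (A - Afib A s).card ≤ 2 * ρ := by
    intro s hs
    rw [hP'', Finset.mem_filter] at hs
    have := Nat.lt_pow_succ_log_self (by norm_num : 1 < 2) ((A - Afib A s).card)
    rw [hs.2] at this
    rw [hρ]
    calc (A - Afib A s).card ≤ 2 ^ (i + 1) := le_of_lt this
      _ = 2 * 2 ^ i := by ring
  have hP''subD : P'' ⊆ A - A := by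
    rw [hP'', hP]
    exact (Finset.filter_subset _ _).trans (Finset.filter_subset _ _)
  have hMK : M ≤ K := Finset.card_le_card hP''subD
  -- ℕ fact F5 : n^2 ≤ 2*J*J'*(M*Δ)
  have F5 : n ^ 2 ≤ 2 * J * J' * (M * Δ) := by
    have h1 : ∑ s ∈ P, rSub A A s ≤ P.card * (2 * Δ) := by
      have := Finset.sum_le_card_nsmul P (rSub A A) (2 * Δ) (fun s hs => hΔge s hs)
      simpa [smul_eq_mul] using this
    calc n ^ 2 = n * n := sq n
      _ ≤ J * ∑ s ∈ P, rSub A A s := hsum1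
      _ ≤ J * (P.card * (2 * Δ)) := Nat.mul_le_mul_left _ h1
      _ ≤ J * ((J' * M) * (2 * Δ)) :=
          Nat.mul_le_mul_left _ (Nat.mul_le_mul_right _ hcard1)
      _ = 2 * J * J' * (M * Δ) := by ring
  have hM1 : 1 ≤ M := by
    by_contra h
    have : M = 0 := by omega
    rw [this] at F5
    simp at F5
    omega
  have hP''P : P'' ⊆ P := Finset.filter_subset _ _
  -- ℕ fact F1
  have F1 : M * (n * Δ) ^ 2 ≤ 2 * ρ * (trip A).card := by
    have per : ∀ s ∈ P'', (n * Δ) ^ 2 ≤ 2 * ρ * (quad A (Afib A s)).card := by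
      intro s hs
      have h1 : (∑ x ∈ A - Afib A s, rSub A (Afib A s) x) = n * rSub A A s := by
        rw [sum_rSub, card_Afib]
      have h2 := cs_one (A - Afib A s) (rSub A (Afib A s))
      rw [h1, sum_rSub_sq] at h2
      calc (n * Δ) ^ 2 ≤ (n * rSub A A s) ^ 2 :=
            Nat.pow_le_pow_left (Nat.mul_le_mul_left _ (hΔle s (hP''P hs))) 2
        _ ≤ (A - Afib A s).card * (quad A (Afib A s)).card := h2
        _ ≤ (2 * ρ) * (quad A (Afib A s)).card := Nat.mul_le_mul_right _ (hρge s hs)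
        _ = 2 * ρ * (quad A (Afib A s)).card := by ring
    calc M * (n * Δ) ^ 2 ≤ ∑ s ∈ P'', 2 * ρ * (quad A (Afib A s)).card := by
          have := Finset.card_nsmul_le_sum P''
            (fun s => 2 * ρ * (quad A (Afib A s)).card) ((n * Δ) ^ 2) per
          simpa [smul_eq_mul] using this
      _ = 2 * ρ * ∑ s ∈ P'', (quad A (Afib A s)).card := by rw [Finset.mul_sum]
      _ ≤ 2 * ρ * (trip A).card :=
          Nat.mul_le_mul_left _ (sum_quad_Afib_le A P'')
  -- ℕ fact F2
  have F2 : M * (Δ * ρ) ≤ (quad A (A - A)).card := by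
    have per : ∀ s ∈ P'', Δ * ρ ≤ rSub A A s * (A - Afib A s).card := fun s hs =>
      Nat.mul_le_mul (hΔle s (hP''P hs)) (hρle s hs)
    calc M * (Δ * ρ) ≤ ∑ s ∈ P'', rSub A A s * (A - Afib A s).card := by
          have := Finset.card_nsmul_le_sum P''
            (fun s => rSub A A s * (A - Afib A s).card) (Δ * ρ) per
          simpa [smul_eq_mul] using this
      _ ≤ (quad A (A - A)).card := sum_r_rho_le A P''
  -- E3 and EAD
  set E3n := (trip A).card with hE3n
  set EADn := (quad A (A - A)).card with hEADn
  have hEADpos : 1 ≤ EADn := by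
    have h := Nat.mul_le_mul hM1 (Nat.mul_le_mul hΔ1 hρ1)
    simpa using le_trans (by simpa using h) F2
  -- ℕ fact F4 : E3n^4 ≤ K * (E4 A A)^3
  have F4 : E3n ^ 4 ≤ K * (E4 A A) ^ 3 := by
    have c34 := cs_34 (A - A) (rSub A A)
    have c1 := cs_one (A - A) (fun x => (rSub A A x) ^ 2)
    have e1 : ∀ x : G, ((rSub A A x) ^ 2) ^ 2 = (rSub A A x) ^ 4 := fun x => by ring
    simp_rw [e1] at c1
    have hE3n' : E3n = ∑ x ∈ A - A, (rSub A A x) ^ 3 := (sum_rSub_cube A).symm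
    have hE4' : E4 A A = ∑ x ∈ A - A, (rSub A A x) ^ 4 := rfl
    rw [hE3n', hE4']
    calc (∑ x ∈ A - A, (rSub A A x) ^ 3) ^ 4
        = ((∑ x ∈ A - A, (rSub A A x) ^ 3) ^ 2) ^ 2 := by ring
      _ ≤ ((∑ x ∈ A - A, (rSub A A x) ^ 2) * ∑ x ∈ A - A, (rSub A A x) ^ 4) ^ 2 :=
          Nat.pow_le_pow_left c34 2
      _ = (∑ x ∈ A - A, (rSub A A x) ^ 2) ^ 2 * (∑ x ∈ A - A, (rSub A A x) ^ 4) ^ 2 := by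
          ring
      _ ≤ (K * ∑ x ∈ A - A, (rSub A A x) ^ 4) * (∑ x ∈ A - A, (rSub A A x) ^ 4) ^ 2 :=
          Nat.mul_le_mul_right _ c1
      _ = K * (∑ x ∈ A - A, (rSub A A x) ^ 4) ^ 3 := by ring
  -- ℕ fact F3 : EADn^3 ≤ (n*K)^2 * (E4 A (A - A))
  have F3 : EADn ^ 3 ≤ (n * K) ^ 2 * E4 A (A - A) := by
    have c23 := cs_23 (A - (A - A)) (rSub A (A - A))
    have c34 := cs_34 (A - (A - A)) (rSub A (A - A))
    have hsum : ∑ x ∈ A - (A - A), rSub A (A - A) x = n * K := sum_rSub A (A - A)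
    have hEAD' : EADn = ∑ x ∈ A - (A - A), (rSub A (A - A) x) ^ 2 :=
      (sum_rSub_sq A (A - A)).symm
    have hE4' : E4 A (A - A) = ∑ x ∈ A - (A - A), (rSub A (A - A) x) ^ 4 := rfl
    have key : EADn ^ 3 * EADn ≤ ((n * K) ^ 2 * E4 A (A - A)) * EADn := by
      calc EADn ^ 3 * EADn = (EADn ^ 2) ^ 2 := by ring
        _ ≤ ((∑ x ∈ A - (A - A), rSub A (A - A) x) *
              ∑ x ∈ A - (A - A), (rSub A (A - A) x) ^ 3) ^ 2 := by
            rw [hEAD']; exact Nat.pow_le_pow_left c23 2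
        _ = (∑ x ∈ A - (A - A), rSub A (A - A) x) ^ 2 *
              (∑ x ∈ A - (A - A), (rSub A (A - A) x) ^ 3) ^ 2 := by ring
        _ ≤ (∑ x ∈ A - (A - A), rSub A (A - A) x) ^ 2 *
              ((∑ x ∈ A - (A - A), (rSub A (A - A) x) ^ 2) *
               ∑ x ∈ A - (A - A), (rSub A (A - A) x) ^ 4) :=
            Nat.mul_le_mul_left _ c34
        _ = ((n * K) ^ 2 * E4 A (A - A)) * EADn := by
            rw [hsum, hEAD', hE4']; ring
    exact Nat.le_of_mul_le_mul_right key (by omega)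
  -- move to ℝ
  have hDn : ((A - A).card : ℝ) = (K : ℝ) := by rw [hK]
  have hyp1 := hyp A hAne
  have hyp2 := hyp (A - A) hDne
  rw [hDn] at hyp2
  have hnn : ((A.card : ℝ)) = (n : ℝ) := by rw [hn]
  rw [hnn] at hyp1 hyp2
  set L : ℝ := Real.log (n : ℝ) with hL
  have hn2R : (2 : ℝ) ≤ (n : ℝ) := by exact_mod_cast hn2
  have hLpos : 0 < L := Real.log_pos (by linarith)
  have hl2 : (0.6931471803 : ℝ) < Real.log 2 := Real.log_two_gt_d9
  have hl2L : Real.log 2 ≤ L := by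
    rw [hL]
    exact (Real.log_le_log_iff (by norm_num) (by linarith)).mpr hn2R
  -- J ≤ 3 L
  have RJ : (J : ℝ) ≤ 3 * L := by
    have h1 : ((2 : ℝ)) ^ (Nat.log 2 n) ≤ (n : ℝ) := by
      exact_mod_cast Nat.pow_log_le_self 2 (show n ≠ 0 by omega)
    have h2 : (Nat.log 2 n : ℝ) * Real.log 2 ≤ L := by
      rw [hL, ← Real.log_pow]
      exact (Real.log_le_log_iff (by positivity) (by linarith)).mpr h1
    have h3 : (0 : ℝ) ≤ (Nat.log 2 n : ℝ) := by positivity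
    have hJR : (J : ℝ) = (Nat.log 2 n : ℝ) + 1 := by rw [hJ]; push_cast; ring
    rw [hJR]
    nlinarith [h2, h3, hl2, hl2L, hLpos]
  -- J' ≤ 5 L
  have RJ' : (J' : ℝ) ≤ 5 * L := by
    have h1 : ((2 : ℝ)) ^ (Nat.log 2 K) ≤ (K : ℝ) := by
      exact_mod_cast Nat.pow_log_le_self 2 (show K ≠ 0 by omega)
    have hKR : (K : ℝ) ≤ (n : ℝ) ^ 2 := by
      have : (K : ℝ) ≤ (n : ℝ) * (n : ℝ) := by exact_mod_cast hKn2
      nlinarith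
    have h2 : (Nat.log 2 K : ℝ) * Real.log 2 ≤ 2 * L := by
      have ha : Real.log ((2 : ℝ) ^ (Nat.log 2 K)) ≤ Real.log ((n : ℝ) ^ 2) :=
        (Real.log_le_log_iff (by positivity) (by positivity)).mpr (le_trans h1 hKR)
      rw [Real.log_pow, Real.log_pow] at ha
      rw [hL]
      push_cast at ha ⊢
      linarith
    have h3 : (0 : ℝ) ≤ (Nat.log 2 K : ℝ) := by positivity
    have hJR : (J' : ℝ) = (Nat.log 2 K : ℝ) + 1 := by rw [hJ']; push_cast; ring
    rw [hJR]
    nlinarith [h2, h3, hl2, hl2L, hLpos]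
  -- real versions of the facts
  have RF1 : (M : ℝ) * ((n : ℝ) * (Δ : ℝ)) ^ 2 ≤ 2 * (ρ : ℝ) * (E3n : ℝ) := by
    exact_mod_cast F1
  have RF2 : (M : ℝ) * ((Δ : ℝ) * (ρ : ℝ)) ≤ (EADn : ℝ) := by exact_mod_cast F2
  have RF5 : (n : ℝ) ^ 2 ≤ 2 * (J : ℝ) * (J' : ℝ) * ((M : ℝ) * (Δ : ℝ)) := by
    exact_mod_cast F5
  have RF6 : (M : ℝ) ≤ (K : ℝ) := by exact_mod_cast hMK
  have RF4 : (E3n : ℝ) ^ 4 ≤ (K : ℝ) * (d * (n : ℝ) ^ 4) ^ 3 := by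
    have h1 : (E3n : ℝ) ^ 4 ≤ (K : ℝ) * ((E4 A A : ℝ)) ^ 3 := by exact_mod_cast F4
    have h2 : (E4 A A : ℝ) ≤ d * (n : ℝ) * (n : ℝ) ^ 3 := by
      have := hyp1; rwa [hnn] at this
    calc (E3n : ℝ) ^ 4 ≤ (K : ℝ) * ((E4 A A : ℝ)) ^ 3 := h1
      _ ≤ (K : ℝ) * (d * (n : ℝ) * (n : ℝ) ^ 3) ^ 3 := by
          have h0 : (0:ℝ) ≤ (E4 A A : ℝ) := by positivity
          gcongr
      _ = (K : ℝ) * (d * (n : ℝ) ^ 4) ^ 3 := by ring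
  have RF3 : (EADn : ℝ) ^ 3 ≤ ((n : ℝ) * (K : ℝ)) ^ 2 * (d * (n : ℝ) * (K : ℝ) ^ 3) := by
    have h1 : (EADn : ℝ) ^ 3 ≤ ((n : ℝ) * (K : ℝ)) ^ 2 * (E4 A (A - A) : ℝ) := by
      exact_mod_cast F3
    calc (EADn : ℝ) ^ 3 ≤ ((n : ℝ) * (K : ℝ)) ^ 2 * (E4 A (A - A) : ℝ) := h1
      _ ≤ ((n : ℝ) * (K : ℝ)) ^ 2 * (d * (n : ℝ) * (K : ℝ) ^ 3) := by gcongr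
  -- positivity facts
  have hM1R : (1 : ℝ) ≤ (M : ℝ) := by exact_mod_cast hM1
  have hΔ1R : (1 : ℝ) ≤ (Δ : ℝ) := by exact_mod_cast hΔ1
  have hρ1R : (1 : ℝ) ≤ (ρ : ℝ) := by exact_mod_cast hρ1
  have hK1R : (1 : ℝ) ≤ (K : ℝ) := by exact_mod_cast hK1
  have hEAD1R : (1 : ℝ) ≤ (EADn : ℝ) := by exact_mod_cast hEADpos
  have hE3nn : (0 : ℝ) ≤ (E3n : ℝ) := by positivity
  -- combine
  have h1 : (M : ℝ) ^ 2 * (n : ℝ) ^ 2 * (Δ : ℝ) ^ 3 ≤ 2 * (E3n : ℝ) * (EADn : ℝ) := by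
    have hmul := mul_le_mul RF1 RF2 (by positivity) (by positivity)
    have e1 : (M : ℝ) * ((n : ℝ) * (Δ : ℝ)) ^ 2 * ((M : ℝ) * ((Δ : ℝ) * (ρ : ℝ)))
        = ((M : ℝ) ^ 2 * (n : ℝ) ^ 2 * (Δ : ℝ) ^ 3) * (ρ : ℝ) := by ring
    have e2 : 2 * (ρ : ℝ) * (E3n : ℝ) * (EADn : ℝ)
        = (2 * (E3n : ℝ) * (EADn : ℝ)) * (ρ : ℝ) := by ring
    rw [e1, e2] at hmul
    exact le_of_mul_le_mul_right hmul (by positivity)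
  have h5 : (M : ℝ) ^ 24 * (n : ℝ) ^ 24 * (Δ : ℝ) ^ 36
      ≤ 2 ^ 12 * ((K : ℝ) ^ 23 * d ^ 13 * (n : ℝ) ^ 48) := by
    calc (M : ℝ) ^ 24 * (n : ℝ) ^ 24 * (Δ : ℝ) ^ 36
        = ((M : ℝ) ^ 2 * (n : ℝ) ^ 2 * (Δ : ℝ) ^ 3) ^ 12 := by ring
      _ ≤ (2 * (E3n : ℝ) * (EADn : ℝ)) ^ 12 := by
          exact pow_le_pow_left₀ (by positivity) h1 12
      _ = 2 ^ 12 * ((E3n : ℝ) ^ 4) ^ 3 * ((EADn : ℝ) ^ 3) ^ 4 := by ring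
      _ ≤ 2 ^ 12 * ((K : ℝ) * (d * (n : ℝ) ^ 4) ^ 3) ^ 3 *
            (((n : ℝ) * (K : ℝ)) ^ 2 * (d * (n : ℝ) * (K : ℝ) ^ 3)) ^ 4 := by
          have hb1 : (0:ℝ) ≤ (E3n : ℝ) ^ 4 := by positivity
          have hb2 : (0:ℝ) ≤ (EADn : ℝ) ^ 3 := by positivity
          gcongr
      _ = 2 ^ 12 * ((K : ℝ) ^ 23 * d ^ 13 * (n : ℝ) ^ 48) := by ring
  have h6 : (n : ℝ) ^ 96 ≤ (2 * (J:ℝ) * (J':ℝ)) ^ 36 *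
      ((K : ℝ) ^ 12 * (2 ^ 12 * ((K : ℝ) ^ 23 * d ^ 13 * (n : ℝ) ^ 48))) := by
    calc (n : ℝ) ^ 96 = ((n : ℝ) ^ 2) ^ 36 * (n : ℝ) ^ 24 := by ring
      _ ≤ (2 * (J:ℝ) * (J':ℝ) * ((M:ℝ) * (Δ:ℝ))) ^ 36 * (n : ℝ) ^ 24 := by
          gcongr <;> positivity
      _ = (2 * (J:ℝ) * (J':ℝ)) ^ 36 *
            ((M : ℝ) ^ 12 * ((M : ℝ) ^ 24 * (n : ℝ) ^ 24 * (Δ : ℝ) ^ 36)) := by ring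
      _ ≤ (2 * (J:ℝ) * (J':ℝ)) ^ 36 *
            ((K : ℝ) ^ 12 * (2 ^ 12 * ((K : ℝ) ^ 23 * d ^ 13 * (n : ℝ) ^ 48))) := by
          have hJpos : (0:ℝ) ≤ 2 * (J:ℝ) * (J':ℝ) := by positivity
          gcongr
          all_goals first
            | exact le_trans hM1R RF6
            | exact h5

  have h7 : (2 * (J:ℝ) * (J':ℝ)) ^ 36 ≤ 30 ^ 36 * L ^ 72 := by
    have hstep : 2 * (J:ℝ) * (J':ℝ) ≤ 30 * L ^ 2 := by
      have hJ0 : (0:ℝ) ≤ (J:ℝ) := by positivity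
      have hJ'0 : (0:ℝ) ≤ (J':ℝ) := by positivity
      nlinarith [RJ, RJ', hLpos]
    calc (2 * (J:ℝ) * (J':ℝ)) ^ 36 ≤ (30 * L ^ 2) ^ 36 := by
          exact pow_le_pow_left₀ (by positivity) hstep 36
      _ = 30 ^ 36 * L ^ 72 := by ring
  have h8 : (n : ℝ) ^ 48 ≤ 2 ^ 12 * 30 ^ 36 * L ^ 72 * ((K : ℝ) ^ 35 * d ^ 13) := by
    have key : (n : ℝ) ^ 48 * (n : ℝ) ^ 48
        ≤ (2 ^ 12 * 30 ^ 36 * L ^ 72 * ((K : ℝ) ^ 35 * d ^ 13)) * (n : ℝ) ^ 48 := by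
      calc (n : ℝ) ^ 48 * (n : ℝ) ^ 48 = (n : ℝ) ^ 96 := by ring
        _ ≤ (2 * (J:ℝ) * (J':ℝ)) ^ 36 *
              ((K : ℝ) ^ 12 * (2 ^ 12 * ((K : ℝ) ^ 23 * d ^ 13 * (n : ℝ) ^ 48))) := h6
        _ ≤ (30 ^ 36 * L ^ 72) *
              ((K : ℝ) ^ 12 * (2 ^ 12 * ((K : ℝ) ^ 23 * d ^ 13 * (n : ℝ) ^ 48))) := by
            have : (0:ℝ) ≤ (K : ℝ) ^ 12 * (2 ^ 12 * ((K : ℝ) ^ 23 * d ^ 13 * (n : ℝ) ^ 48)) := by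
              positivity
            exact mul_le_mul_of_nonneg_right h7 this
        _ = (2 ^ 12 * 30 ^ 36 * L ^ 72 * ((K : ℝ) ^ 35 * d ^ 13)) * (n : ℝ) ^ 48 := by ring
    exact le_of_mul_le_mul_right key (by positivity)
  -- finish
  have hc72 : Real.log ((A.card : ℝ)) ^ (72 : ℝ) = L ^ (72 : ℕ) := by
    rw [hnn, hL, ← Real.rpow_natCast (Real.log (n : ℝ)) 72]
    norm_num
  rw [hnn, hDn, hc72, div_le_iff₀ (by positivity)]
  calc ((2:ℝ) ^ 12 * 30 ^ 36)⁻¹ * (n : ℝ) ^ 48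
      ≤ ((2:ℝ) ^ 12 * 30 ^ 36)⁻¹ * (2 ^ 12 * 30 ^ 36 * L ^ 72 * ((K : ℝ) ^ 35 * d ^ 13)) := by
        have : (0:ℝ) ≤ ((2:ℝ) ^ 12 * 30 ^ 36)⁻¹ := by positivity
        exact mul_le_mul_of_nonneg_left h8 this
    _ = (K : ℝ) ^ 35 * d ^ 13 * L ^ 72 := by
        field_simp
end

section
/- Let G be an abelian group and let A ⊆ G be a finite set. Then E_4^+(A) = Σ_{x ∈ G} Σ_{w ∈ G} E^+(A_x, A_w), where A_x := A ∩ (A + x). -/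
open Finset
open scoped Pointwise

/-- The additive energy `E^+(A,B) = Σ_x r_{A−B}(x)^2`; the summand is supported on
the difference set `A − B`. -/
def E2 {G : Type*} [AddCommGroup G] [DecidableEq G] (A B : Finset G) : ℕ :=
  ∑ x ∈ A - B, (rSub A B x) ^ 2

section Aux

variable {G : Type*} [AddCommGroup G] [DecidableEq G]

lemma mem_add_singleton' {A : Finset G} {x a : G} :
    a ∈ A + ({x} : Finset G) ↔ a - x ∈ A := by
  simp only [Finset.mem_add, Finset.mem_singleton]
  constructor
  · rintro ⟨b, hb, c, rfl, rfl⟩; simpa using hb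
  · intro h; exact ⟨a - x, h, x, rfl, by abel⟩

omit [DecidableEq G] in
lemma sub_eq_sub_iff' {a b c d : G} : a - b = c - d ↔ a - c = b - d := by
  rw [sub_eq_sub_iff_add_eq_add, sub_eq_sub_iff_add_eq_add, add_comm c b]

/-- product of two representation counts as a card of a filtered product. -/
lemma rSub_mul_rSub (B B' C C' : Finset G) (s t : G) :
    rSub B B' s * rSub C C' t =
      (((B ×ˢ B') ×ˢ (C ×ˢ C')).filter fun z =>
        z.1.1 - z.1.2 = s ∧ z.2.1 - z.2.2 = t).card := by
  rw [rSub, rSub, ← Finset.card_product, ← Finset.filter_product]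

/-- The standard energy identity `E2 B C = Σ_s r_{B−B}(s) r_{C−C}(s)`,
with the sum over any set containing `B − B`. -/
lemma E2_eq_sum (B C D : Finset G) (hD : B - B ⊆ D) :
    E2 B C = ∑ s ∈ D, rSub B B s * rSub C C s := by
  classical
  have lhs : E2 B C =
      (((B ×ˢ C) ×ˢ (B ×ˢ C)).filter fun z =>
        z.1.1 - z.1.2 = z.2.1 - z.2.2).card := by
    rw [E2]
    rw [Finset.card_eq_sum_card_fiberwise
      (f := fun z : (G × G) × G × G => z.1.1 - z.1.2) (t := B - C)
      (fun z hz => by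
        simp only [Finset.mem_coe, Finset.mem_filter, Finset.mem_product] at hz
        exact Finset.sub_mem_sub hz.1.1.1 hz.1.1.2)]
    refine Finset.sum_congr rfl fun x _ => ?_
    rw [sq, rSub_mul_rSub, Finset.filter_filter]
    congr 1
    apply Finset.filter_congr
    intro z _
    exact ⟨fun ⟨h1, h2⟩ => ⟨h1.trans h2.symm, h1⟩, fun ⟨h1, h2⟩ => ⟨h2, h1.symm.trans h2⟩⟩
  have rhs : (∑ s ∈ D, rSub B B s * rSub C C s) =
      (((B ×ˢ B) ×ˢ (C ×ˢ C)).filter fun z =>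
        z.1.1 - z.1.2 = z.2.1 - z.2.2).card := by
    rw [Finset.card_eq_sum_card_fiberwise
      (f := fun z : (G × G) × G × G => z.1.1 - z.1.2) (t := D)
      (fun z hz => by
        simp only [Finset.mem_coe, Finset.mem_filter, Finset.mem_product] at hz
        exact hD (Finset.sub_mem_sub hz.1.1.1 hz.1.1.2))]
    refine Finset.sum_congr rfl fun s _ => ?_
    rw [rSub_mul_rSub, Finset.filter_filter]
    congr 1
    apply Finset.filter_congr
    intro z _
    exact ⟨fun ⟨h1, h2⟩ => ⟨h1.trans h2.symm, h1⟩, fun ⟨h1, h2⟩ => ⟨h2, h1.symm.trans h2⟩⟩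
  rw [lhs, rhs]
  refine Finset.card_bij' (fun z _ => ((z.1.1, z.2.1), (z.1.2, z.2.2)))
    (fun z _ => ((z.1.1, z.2.1), (z.1.2, z.2.2))) ?_ ?_ ?_ ?_
  · intro z hz
    simp only [Finset.mem_filter, Finset.mem_product] at hz ⊢
    exact ⟨⟨⟨hz.1.1.1, hz.1.2.1⟩, hz.1.1.2, hz.1.2.2⟩, sub_eq_sub_iff'.mp hz.2⟩
  · intro z hz
    simp only [Finset.mem_filter, Finset.mem_product] at hz ⊢
    exact ⟨⟨⟨hz.1.1.1, hz.1.2.1⟩, hz.1.1.2, hz.1.2.2⟩, sub_eq_sub_iff'.mp hz.2⟩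
  · intro z _; rfl
  · intro z _; rfl

/-- Key identity: `Σ_{x ∈ A−A} r_{A_x − A_x}(s) = r_{A−A}(s)^2`. -/
lemma sum_rSub_translates (A : Finset G) (s : G) :
    (∑ x ∈ A - A, rSub (A ∩ (A + {x})) (A ∩ (A + {x})) s) = rSub A A s * rSub A A s := by
  classical
  rw [rSub_mul_rSub]
  simp only [rSub]
  rw [← Finset.card_sigma]
  refine Finset.card_bij' (fun z _ => ((z.2.1, z.2.2), (z.2.1 - z.1, z.2.2 - z.1)))
    (fun z _ => (⟨z.1.1 - z.2.1, (z.1.1, z.1.2)⟩ : Σ _ : G, G × G)) ?_ ?_ ?_ ?_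
  · rintro ⟨x, p, p'⟩ hz
    simp only [Finset.mem_sigma, Finset.mem_filter, Finset.mem_product, Finset.mem_inter,
      mem_add_singleton'] at hz ⊢
    obtain ⟨-, ⟨⟨hp, hpx⟩, hp', hp'x⟩, hs⟩ := hz
    refine ⟨⟨⟨hp, hp'⟩, hpx, hp'x⟩, hs, ?_⟩
    rw [← hs]; abel
  · rintro ⟨⟨a, b⟩, c, d⟩ hz
    simp only [Finset.mem_sigma, Finset.mem_filter, Finset.mem_product, Finset.mem_inter,
      mem_add_singleton'] at hz ⊢
    obtain ⟨⟨⟨ha, hb⟩, hc, hd⟩, hab, hcd⟩ := hz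
    rw [← hab] at hcd
    have h3 : a - c = b - d := sub_eq_sub_iff'.mp hcd.symm
    refine ⟨Finset.sub_mem_sub ha hc, ⟨⟨ha, ?_⟩, hb, ?_⟩, hab⟩
    · simpa using hc
    · rw [h3, sub_sub_cancel]; exact hd
  · rintro ⟨x, p, p'⟩ hz
    simp only [Finset.mem_sigma, Finset.mem_filter] at hz
    simp only [sub_sub_cancel]
  · rintro ⟨⟨a, b⟩, c, d⟩ hz
    simp only [Finset.mem_sigma, Finset.mem_filter, Finset.mem_product, Finset.mem_inter,
      mem_add_singleton'] at hz
    obtain ⟨-, hab, hcd⟩ := hz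
    rw [← hab] at hcd
    have h3 : a - c = b - d := sub_eq_sub_iff'.mp hcd.symm
    have h1 : a - (a - c) = c := by abel
    have h2 : b - (a - c) = d := by rw [h3, sub_sub_cancel]
    simp [h1, h2]

end Aux

/-- `E_4^+(A) = Σ_{x,w ∈ G} E^+(A_x, A_w)` where `A_x = A ∩ (A + x)`; the summands
are supported on `x, w ∈ A − A`. -/
theorem E4_eq_sum_E2_translates {G : Type*} [AddCommGroup G] [DecidableEq G]
    (A : Finset G) :
    E4 A A = ∑ x ∈ A - A, ∑ w ∈ A - A, E2 (A ∩ (A + {x})) (A ∩ (A + {w})) := by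
  classical
  symm
  have hsub : ∀ x : G, (A ∩ (A + {x})) - (A ∩ (A + {x})) ⊆ A - A := fun x =>
    Finset.sub_subset_sub Finset.inter_subset_left Finset.inter_subset_left
  calc ∑ x ∈ A - A, ∑ w ∈ A - A, E2 (A ∩ (A + {x})) (A ∩ (A + {w}))
      = ∑ x ∈ A - A, ∑ w ∈ A - A, ∑ s ∈ A - A,
          rSub (A ∩ (A + {x})) (A ∩ (A + {x})) s * rSub (A ∩ (A + {w})) (A ∩ (A + {w})) s := by
        refine Finset.sum_congr rfl fun x _ => Finset.sum_congr rfl fun w _ => ?_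
        exact E2_eq_sum _ _ _ (hsub x)
    _ = ∑ x ∈ A - A, ∑ s ∈ A - A, ∑ w ∈ A - A,
          rSub (A ∩ (A + {x})) (A ∩ (A + {x})) s * rSub (A ∩ (A + {w})) (A ∩ (A + {w})) s :=
        Finset.sum_congr rfl fun x _ => Finset.sum_comm
    _ = ∑ s ∈ A - A, ∑ x ∈ A - A, ∑ w ∈ A - A,
          rSub (A ∩ (A + {x})) (A ∩ (A + {x})) s * rSub (A ∩ (A + {w})) (A ∩ (A + {w})) s :=
        Finset.sum_comm
    _ = ∑ s ∈ A - A, (∑ x ∈ A - A, rSub (A ∩ (A + {x})) (A ∩ (A + {x})) s) *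
          (∑ w ∈ A - A, rSub (A ∩ (A + {w})) (A ∩ (A + {w})) s) :=
        Finset.sum_congr rfl fun s _ => (Finset.sum_mul_sum _ _ _ _).symm
    _ = ∑ s ∈ A - A, (rSub A A s) ^ 4 := by
        refine Finset.sum_congr rfl fun s _ => ?_
        rw [sum_rSub_translates]; ring
    _ = E4 A A := rfl
end

section
/- Let G be an abelian group, let A ⊆ G be a finite set, and let P be any finite subset of A − A. Then (Σ_{x ∈ P} |A_x|)^4 ≤ E_4^+(A) · Σ_{x ∈ P} Σ_{w ∈ P} |A_x − A_w|, and likewise (Σ_{x ∈ P} |A_x|)^4 ≤ E_4^+(A) · Σ_{x ∈ P} Σ_{w ∈ P} |A_x + A_w|, where A_x := A ∩ (A + x). -/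
open Finset
open scoped Pointwise

namespace AuxSK
variable {G : Type*} [AddCommGroup G] [DecidableEq G]

/-- Key algebraic identity for the additive equivalence `e`. -/
lemma key_iff (e : G ≃+ G) (a b c d : G) :
    (a + e b = c + e d) ↔ (b - d = e.symm (-(a - c))) := by
  rw [← e.injective.eq_iff (a := b - d), map_sub, AddEquiv.apply_symm_apply, neg_sub,
    sub_eq_sub_iff_add_eq_add, add_comm (e b) a]

/-- counting fiberwise: `|X| * |Y| = ∑_{s} k(s)`. -/
lemma L1 (e : G ≃+ G) (X Y : Finset G) :
    X.card * Y.card =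
      ∑ s ∈ X + Y.image e, ((X ×ˢ Y).filter fun p => p.1 + e p.2 = s).card := by
  rw [← card_product]
  exact card_eq_sum_card_fiberwise fun p hp => by
    rw [mem_coe, mem_product] at hp
    exact add_mem_add hp.1 (mem_image_of_mem e hp.2)

lemma L2 (e : G ≃+ G) (X Y : Finset G) :
    ∑ s ∈ X + Y.image e, ((X ×ˢ Y).filter fun p => p.1 + e p.2 = s).card ^ 2 =
      (((X ×ˢ Y) ×ˢ (X ×ˢ Y)).filter fun q =>
        q.1.1 + e q.1.2 = q.2.1 + e q.2.2).card := by
  have hmaps : ∀ q ∈ ((X ×ˢ Y) ×ˢ (X ×ˢ Y)).filter fun q =>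
      q.1.1 + e q.1.2 = q.2.1 + e q.2.2, q.1.1 + e q.1.2 ∈ X + Y.image e := by
    rintro ⟨⟨a, b⟩, ⟨c, d⟩⟩ hq
    simp only [mem_filter, mem_product] at hq
    exact add_mem_add hq.1.1.1 (mem_image_of_mem e hq.1.1.2)
  rw [card_eq_sum_card_fiberwise hmaps]
  refine sum_congr rfl fun s _ => ?_
  rw [sq, ← card_product]
  congr 1
  ext ⟨⟨a, b⟩, ⟨c, d⟩⟩
  simp only [mem_filter, mem_product]
  constructor
  · rintro ⟨⟨h1, hs1⟩, h2, hs2⟩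
    exact ⟨⟨⟨h1, h2⟩, hs1.trans hs2.symm⟩, hs1⟩
  · rintro ⟨⟨hm, heq⟩, hs⟩
    exact ⟨⟨hm.1, hs⟩, hm.2, heq.symm.trans hs⟩

lemma L3 (A : Finset G) (e : G ≃+ G) (x w : G) :
    ((((A ∩ (A + {x})) ×ˢ (A ∩ (A + {w}))) ×ˢ ((A ∩ (A + {x})) ×ˢ (A ∩ (A + {w})))).filter
        fun q => q.1.1 + e q.1.2 = q.2.1 + e q.2.2) =
      (((A ×ˢ A) ×ˢ (A ×ˢ A)).filter fun q =>
        (q.1.1 + e q.1.2 = q.2.1 + e q.2.2) ∧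
        (q.1.1 ∈ A ∩ (A + {x}) ∧ q.2.1 ∈ A ∩ (A + {x})) ∧
        (q.1.2 ∈ A ∩ (A + {w}) ∧ q.2.2 ∈ A ∩ (A + {w}))) := by
  ext ⟨⟨a, b⟩, ⟨c, d⟩⟩
  simp only [mem_filter, mem_product, mem_inter]
  tauto

end AuxSK

namespace AuxSK
variable {G : Type*} [AddCommGroup G] [DecidableEq G]

lemma card_inter_eq_rSub (A : Finset G) (x : G) :
    (A ∩ (A + {x})).card = rSub A A x := by
  unfold rSub
  apply Finset.card_bij (fun a _ => (a, a - x))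
  · intro a ha
    simp only [mem_inter, mem_add, mem_singleton] at ha
    obtain ⟨h1, b, hb, c, rfl, rfl⟩ := ha
    simp only [mem_filter, mem_product]
    exact ⟨⟨h1, by simpa using hb⟩, by abel⟩
  · intro a _ b _ h
    simpa using congrArg Prod.fst h
  · rintro ⟨a, b⟩ hab
    simp only [mem_filter, mem_product] at hab
    obtain ⟨⟨ha, hb⟩, hx⟩ := hab
    refine ⟨a, ?_, ?_⟩
    · simp only [mem_inter, mem_add, mem_singleton]
      exact ⟨ha, b, hb, x, rfl, by rw [← hx]; abel⟩
    · have : a - x = b := by rw [← hx]; abel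
      rw [this]

lemma rSub_neg (A : Finset G) (x : G) : rSub A A (-x) = rSub A A x := by
  unfold rSub
  apply Finset.card_bij (fun p _ => (p.2, p.1))
  · rintro ⟨a, b⟩ h
    simp only [mem_filter, mem_product] at h ⊢
    exact ⟨⟨h.1.2, h.1.1⟩, by have := h.2; rw [← neg_eq_iff_eq_neg.mpr this]; abel⟩
  · rintro ⟨a, b⟩ _ ⟨c, d⟩ _ h
    simp only [Prod.mk.injEq] at h ⊢
    exact ⟨h.2, h.1⟩
  · rintro ⟨a, b⟩ h
    simp only [mem_filter, mem_product] at h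
    exact ⟨(b, a), by simp only [mem_filter, mem_product]; exact ⟨⟨h.1.2, h.1.1⟩, by rw [← h.2]; abel⟩, rfl⟩

lemma count_le (A P : Finset G) (a c : G) :
    (P.filter fun x => a ∈ A ∩ (A + {x}) ∧ c ∈ A ∩ (A + {x})).card ≤ rSub A A (a - c) := by
  unfold rSub
  apply card_le_card_of_injOn (fun x => (a - x, c - x))
  · intro x hx
    simp only [mem_coe, mem_filter, mem_inter, mem_add, mem_singleton] at hx
    obtain ⟨_, ⟨_, b, hb, y, rfl, hax⟩, _, b', hb', y', rfl, hcx⟩ := hx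
    simp only [mem_coe, mem_filter, mem_product]
    refine ⟨⟨?_, ?_⟩, by abel⟩
    · rw [← hax]; simpa using hb
    · rw [← hcx]; simpa using hb'
  · intro x _ y _ h
    have h1 : a - x = a - y := congrArg Prod.fst h
    exact sub_right_injective h1

lemma L5 (A : Finset G) (e : G ≃+ G) (he : ∀ y : G, rSub A A (e.symm (-y)) = rSub A A y) :
    ∑ q ∈ (((A ×ˢ A) ×ˢ (A ×ˢ A)).filter fun q : (G × G) × G × G =>
        q.1.1 + e q.1.2 = q.2.1 + e q.2.2), (rSub A A (q.1.1 - q.2.1)) ^ 2 = E4 A A := by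
  have hmaps : ∀ q ∈ (((A ×ˢ A) ×ˢ (A ×ˢ A)).filter fun q : (G × G) × G × G =>
      q.1.1 + e q.1.2 = q.2.1 + e q.2.2), q.1.1 - q.2.1 ∈ A - A := by
    rintro ⟨⟨a, b⟩, c, d⟩ hq
    simp only [mem_filter, mem_product] at hq
    exact sub_mem_sub hq.1.1.1 hq.1.2.1
  rw [E4, ← Finset.sum_fiberwise_of_maps_to hmaps]
  refine sum_congr rfl fun y _ => ?_
  rw [sum_congr rfl fun q hq => by rw [(mem_filter.mp hq).2]]
  rw [sum_const, smul_eq_mul]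
  have hcard : ((((A ×ˢ A) ×ˢ (A ×ˢ A)).filter fun q : (G × G) × G × G =>
        q.1.1 + e q.1.2 = q.2.1 + e q.2.2).filter fun q => q.1.1 - q.2.1 = y).card
      = rSub A A y * rSub A A (e.symm (-y)) := by
    rw [show rSub A A y * rSub A A (e.symm (-y)) =
      ((((A ×ˢ A).filter fun p => p.1 - p.2 = y)) ×ˢ
       (((A ×ˢ A).filter fun p => p.1 - p.2 = e.symm (-y)))).card by
        rw [card_product]; rfl]
    refine Finset.card_bij' (fun q _ => ((q.1.1, q.2.1), (q.1.2, q.2.2)))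
      (fun p _ => ((p.1.1, p.2.1), (p.1.2, p.2.2))) ?hi ?hj ?li ?ri
    case hi =>
      rintro ⟨⟨a, b⟩, c, d⟩ hq
      simp only [mem_filter, mem_product] at hq ⊢
      obtain ⟨⟨⟨⟨ha, hb⟩, hc, hd⟩, heq⟩, hy⟩ := hq
      refine ⟨⟨⟨ha, hc⟩, hy⟩, ⟨hb, hd⟩, ?_⟩
      rw [(key_iff e a b c d).mp heq, hy]
    case hj =>
      rintro ⟨⟨a, c⟩, b, d⟩ hp
      simp only [mem_filter, mem_product] at hp ⊢
      obtain ⟨⟨⟨ha, hc⟩, hy⟩, ⟨hb, hd⟩, hbd⟩ := hp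
      refine ⟨⟨⟨⟨ha, hb⟩, hc, hd⟩, ?_⟩, hy⟩
      exact (key_iff e a b c d).mpr (by rw [hy]; exact hbd)
    case li => rintro ⟨⟨a, b⟩, c, d⟩ _; rfl
    case ri => rintro ⟨⟨a, c⟩, b, d⟩ _; rfl
  rw [hcard, he y]
  ring

end AuxSK

namespace AuxSK
variable {G : Type*} [AddCommGroup G] [DecidableEq G]

lemma ite_and_mul (p q : Prop) [Decidable p] [Decidable q] :
    (if p ∧ q then (1 : ℕ) else 0) = (if p then 1 else 0) * (if q then 1 else 0) := by
  by_cases hp : p <;> by_cases hq : q <;> simp [hp, hq]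

lemma L4 (A P : Finset G) (e : G ≃+ G) (he : ∀ y : G, rSub A A (e.symm (-y)) = rSub A A y) :
    ∑ x ∈ P, ∑ w ∈ P,
      (((A ×ˢ A) ×ˢ (A ×ˢ A)).filter fun q : (G × G) × G × G =>
        (q.1.1 + e q.1.2 = q.2.1 + e q.2.2) ∧
        (q.1.1 ∈ A ∩ (A + {x}) ∧ q.2.1 ∈ A ∩ (A + {x})) ∧
        (q.1.2 ∈ A ∩ (A + {w}) ∧ q.2.2 ∈ A ∩ (A + {w}))).card ≤ E4 A A := by
  calc ∑ x ∈ P, ∑ w ∈ P,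
      (((A ×ˢ A) ×ˢ (A ×ˢ A)).filter fun q : (G × G) × G × G =>
        (q.1.1 + e q.1.2 = q.2.1 + e q.2.2) ∧
        (q.1.1 ∈ A ∩ (A + {x}) ∧ q.2.1 ∈ A ∩ (A + {x})) ∧
        (q.1.2 ∈ A ∩ (A + {w}) ∧ q.2.2 ∈ A ∩ (A + {w}))).card
      = ∑ q ∈ (A ×ˢ A) ×ˢ (A ×ˢ A), ∑ x ∈ P, ∑ w ∈ P,
          (if (q.1.1 + e q.1.2 = q.2.1 + e q.2.2) ∧
            (q.1.1 ∈ A ∩ (A + {x}) ∧ q.2.1 ∈ A ∩ (A + {x})) ∧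
            (q.1.2 ∈ A ∩ (A + {w}) ∧ q.2.2 ∈ A ∩ (A + {w})) then 1 else 0) := by
        simp_rw [card_filter]
        conv_lhs => enter [2, x]; rw [Finset.sum_comm]
        rw [Finset.sum_comm]
    _ ≤ ∑ q ∈ (A ×ˢ A) ×ˢ (A ×ˢ A),
          (if q.1.1 + e q.1.2 = q.2.1 + e q.2.2
            then rSub A A (q.1.1 - q.2.1) ^ 2 else 0) := by
        refine sum_le_sum ?_
        rintro ⟨⟨a, b⟩, c, d⟩ hq
        by_cases hEq : a + e b = c + e d
        · simp only [hEq, true_and, if_true]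
          have h1 : ∀ x w : G,
              (if (a ∈ A ∩ (A + {x}) ∧ c ∈ A ∩ (A + {x})) ∧
                  (b ∈ A ∩ (A + {w}) ∧ d ∈ A ∩ (A + {w})) then (1 : ℕ) else 0)
                = (if a ∈ A ∩ (A + {x}) ∧ c ∈ A ∩ (A + {x}) then 1 else 0) *
                  (if b ∈ A ∩ (A + {w}) ∧ d ∈ A ∩ (A + {w}) then 1 else 0) :=
            fun x w => ite_and_mul _ _
          simp_rw [h1]
          rw [← Finset.sum_mul_sum]
          rw [← card_filter, ← card_filter]
          have hc1 := count_le A P a c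
          have hc2 := count_le A P b d
          have hbd : b - d = e.symm (-(a - c)) := (key_iff e a b c d).mp hEq
          rw [hbd, he] at hc2
          calc _ ≤ rSub A A (a - c) * rSub A A (a - c) := Nat.mul_le_mul hc1 hc2
            _ = rSub A A (a - c) ^ 2 := (sq _).symm
        · simp [hEq]
    _ = ∑ q ∈ ((A ×ˢ A) ×ˢ (A ×ˢ A)).filter (fun q : (G × G) × G × G =>
          q.1.1 + e q.1.2 = q.2.1 + e q.2.2), rSub A A (q.1.1 - q.2.1) ^ 2 :=
        (Finset.sum_filter _ _).symm
    _ = E4 A A := L5 A e he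

end AuxSK

namespace AuxSK
variable {G : Type*} [AddCommGroup G] [DecidableEq G]

lemma mainL (A P : Finset G) (e : G ≃+ G)
    (he : ∀ y : G, rSub A A (e.symm (-y)) = rSub A A y) :
    (∑ x ∈ P, (A ∩ (A + {x})).card) ^ 4 ≤
      E4 A A * ∑ x ∈ P, ∑ w ∈ P, ((A ∩ (A + {x})) + (A ∩ (A + {w})).image e).card := by
  classical
  set I : Finset ((_ : G × G) × G) :=
    (P ×ˢ P).sigma fun p => (A ∩ (A + {p.1})) + (A ∩ (A + {p.2})).image e with hI
  set g : (_ : G × G) × G → ℕ := fun i =>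
    (((A ∩ (A + {i.1.1})) ×ˢ (A ∩ (A + {i.1.2}))).filter fun p => p.1 + e p.2 = i.2).card
    with hg
  have hS2 : (∑ x ∈ P, (A ∩ (A + {x})).card) ^ 2 = ∑ i ∈ I, g i := by
    rw [sq, Finset.sum_mul_sum, hI, Finset.sum_sigma, Finset.sum_product]
    exact sum_congr rfl fun x _ => sum_congr rfl fun w _ => L1 e _ _
  have hcardI : I.card = ∑ x ∈ P, ∑ w ∈ P,
      ((A ∩ (A + {x})) + (A ∩ (A + {w})).image e).card := by
    rw [hI, Finset.card_sigma, Finset.sum_product]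
  have hsq : ∑ i ∈ I, g i ^ 2 ≤ E4 A A := by
    rw [hI, Finset.sum_sigma, Finset.sum_product]
    calc ∑ x ∈ P, ∑ w ∈ P, ∑ s ∈ (A ∩ (A + {x})) + (A ∩ (A + {w})).image e,
          g ⟨(x, w), s⟩ ^ 2
        = ∑ x ∈ P, ∑ w ∈ P,
          ((((A ×ˢ A) ×ˢ (A ×ˢ A)).filter fun q : (G × G) × G × G =>
            (q.1.1 + e q.1.2 = q.2.1 + e q.2.2) ∧
            (q.1.1 ∈ A ∩ (A + {x}) ∧ q.2.1 ∈ A ∩ (A + {x})) ∧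
            (q.1.2 ∈ A ∩ (A + {w}) ∧ q.2.2 ∈ A ∩ (A + {w}))).card) := by
          refine sum_congr rfl fun x _ => sum_congr rfl fun w _ => ?_
          rw [← L3 A e x w, ← L2 e]
      _ ≤ E4 A A := L4 A P e he
  have CS : (∑ i ∈ I, g i) ^ 2 ≤ I.card * ∑ i ∈ I, g i ^ 2 :=
    sq_sum_le_card_mul_sum_sq
  calc (∑ x ∈ P, (A ∩ (A + {x})).card) ^ 4
      = ((∑ x ∈ P, (A ∩ (A + {x})).card) ^ 2) ^ 2 := by ring
    _ = (∑ i ∈ I, g i) ^ 2 := by rw [hS2]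
    _ ≤ I.card * ∑ i ∈ I, g i ^ 2 := CS
    _ ≤ I.card * E4 A A := Nat.mul_le_mul_left _ hsq
    _ = E4 A A * I.card := mul_comm _ _
    _ = _ := by rw [hcardI]

end AuxSK

/-- For any `P ⊆ A − A`, writing `A_x = A ∩ (A + x)`, one has
`(Σ_{x ∈ P} |A_x|)^4 ≤ E_4^+(A) · Σ_{x,w ∈ P} |A_x − A_w|` and likewise with
`A_x + A_w` in place of `A_x − A_w`. -/
theorem sum_card_translates_pow_four_le {G : Type*} [AddCommGroup G] [DecidableEq G]
    (A P : Finset G) (hP : P ⊆ A - A) :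
    (∑ x ∈ P, (A ∩ (A + {x})).card) ^ 4 ≤
        E4 A A * ∑ x ∈ P, ∑ w ∈ P, ((A ∩ (A + {x})) - (A ∩ (A + {w}))).card ∧
      (∑ x ∈ P, (A ∩ (A + {x})).card) ^ 4 ≤
        E4 A A * ∑ x ∈ P, ∑ w ∈ P, ((A ∩ (A + {x})) + (A ∩ (A + {w}))).card := by


  constructor
  · have h := AuxSK.mainL A P (AddEquiv.neg G) (fun y => by simp)
    have himg : ∀ S T : Finset G, S + T.image ⇑(AddEquiv.neg G) = S - T := by
      intro S T
      rw [show (⇑(AddEquiv.neg G) : G → G) = fun a => -a from rfl,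
        ← Finset.neg_def, ← sub_eq_add_neg]
    simp_rw [himg] at h
    exact h
  · have h := AuxSK.mainL A P (AddEquiv.refl G) (fun y => by
      simpa using AuxSK.rSub_neg A y)
    have himg : ∀ S T : Finset G, S + T.image ⇑(AddEquiv.refl G) = S + T := by
      intro S T
      rw [show (⇑(AddEquiv.refl G) : G → G) = id from rfl, Finset.image_id]
    simp_rw [himg] at h
    exact h
end

section
/- Let G be an abelian group, let A ⊆ G be a finite nonempty set, and let P be any finite subset of A + A. Then (Σ_{x ∈ P} r_{A+A}(x))^8 ≤ |A|^8 · E_4^+(A) · E^+(P). -/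
open Finset
open scoped Pointwise

/-- The representation function `r_{A+B}(x) = #{(a,b) ∈ A × B : x = a + b}`. -/
def rAdd {G : Type*} [AddCommGroup G] [DecidableEq G] (A B : Finset G) (x : G) : ℕ :=
  ((A ×ˢ B).filter fun ab => ab.1 + ab.2 = x).card

section Aux

variable {G : Type*} [AddCommGroup G] [DecidableEq G]

private lemma boole_mul_boole (p q : Prop) [Decidable p] [Decidable q] :
    (if p then (1 : ℕ) else 0) * (if q then 1 else 0) = if p ∧ q then 1 else 0 := by
  by_cases hp : p <;> by_cases hq : q <;> simp [hp, hq]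

private lemma boole_congr {p q : Prop} [Decidable p] [Decidable q] (h : p ↔ q) :
    (if p then (1 : ℕ) else 0) = if q then 1 else 0 := if_congr h rfl rfl

/-- `KK A P b b' = #{a ∈ A : a+b ∈ P ∧ a+b' ∈ P}`. -/
private def KK (A P : Finset G) (b b' : G) : ℕ :=
  (A.filter fun a => a + b ∈ P ∧ a + b' ∈ P).card

/-- `MM A P δ b = #{x ∈ P : x-δ ∈ P ∧ x-b ∈ A}`. -/
private def MM (A P : Finset G) (δ b : G) : ℕ :=
  (P.filter fun x => x - δ ∈ P ∧ x - b ∈ A).card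

/-- `ww A (δ,x,y) = #{b ∈ A : x-b ∈ A ∧ y-b ∈ A ∧ b-δ ∈ A}`. -/
private def ww (A : Finset G) (t : G × G × G) : ℕ :=
  (A.filter fun b => t.2.1 - b ∈ A ∧ t.2.2 - b ∈ A ∧ b - t.1 ∈ A).card

/-- `ii P (δ,x,y) = [x-δ ∈ P ∧ y-δ ∈ P]`. -/
private def ii (P : Finset G) (t : G × G × G) : ℕ :=
  if t.2.1 - t.1 ∈ P ∧ t.2.2 - t.1 ∈ P then 1 else 0

private lemma ii_apply (P : Finset G) (δ x y : G) :
    ii P (δ, x, y) = if x - δ ∈ P ∧ y - δ ∈ P then 1 else 0 := rfl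

private lemma ww_apply (A : Finset G) (δ x y : G) :
    ww A (δ, x, y) = (A.filter fun b => x - b ∈ A ∧ y - b ∈ A ∧ b - δ ∈ A).card := rfl

private lemma sum_rAdd_eq (A P : Finset G) :
    ∑ x ∈ P, rAdd A A x = ∑ p ∈ A ×ˢ A, if p.1 + p.2 ∈ P then (1 : ℕ) else 0 := by
  simp only [rAdd, card_filter]
  rw [Finset.sum_comm]
  exact sum_congr rfl fun p _ => Finset.sum_ite_eq P (p.1 + p.2) (fun _ => 1)

private lemma KK_as_sum (A P : Finset G) (b b' : G) :
    KK A P b b'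
      = ∑ a ∈ A, (if a + b ∈ P then (1 : ℕ) else 0) * (if a + b' ∈ P then 1 else 0) := by
  rw [KK, card_filter]
  exact sum_congr rfl fun a _ => (boole_mul_boole _ _).symm

private lemma sum_sq_eq (A P : Finset G) :
    ∑ a ∈ A, (∑ b ∈ A, if a + b ∈ P then (1 : ℕ) else 0) ^ 2
      = ∑ p ∈ A ×ˢ A, KK A P p.1 p.2 := by
  simp only [Finset.sum_product]
  simp only [KK_as_sum, sq, Finset.sum_mul_sum]
  rw [Finset.sum_comm]
  exact sum_congr rfl fun b _ => Finset.sum_comm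

/-- support of `KK`. -/
private lemma KK_support {A P : Finset G} {b b' : G} (h : KK A P b b' ≠ 0) :
    b - b' ∈ P - P := by
  obtain ⟨a, ha⟩ := Finset.card_pos.mp (Nat.pos_of_ne_zero h)
  rw [mem_filter] at ha
  have h2 := Finset.sub_mem_sub ha.2.1 ha.2.2
  rwa [add_sub_add_left_eq_sub] at h2

private lemma KK_shift (A P : Finset G) (δ b : G) : KK A P b (b - δ) = MM A P δ b := by
  rw [KK, MM]
  apply card_nbij' (i := fun a => a + b) (j := fun x => x - b)
  · intro a ha
    dsimp only
    rw [mem_coe, mem_filter] at ha ⊢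
    refine ⟨ha.2.1, ?_, ?_⟩
    · have h2 := ha.2.2
      rwa [show a + (b - δ) = a + b - δ from by abel] at h2
    · rw [show a + b - b = a from by abel]
      exact ha.1
  · intro x hx
    dsimp only
    rw [mem_coe, mem_filter] at hx ⊢
    refine ⟨hx.2.2, ?_, ?_⟩
    · rw [show x - b + b = x from by abel]
      exact hx.1
    · rw [show x - b + (b - δ) = x - δ from by abel]
      exact hx.2.1
  · intro a _
    dsimp only
    rw [show a + b - b = a from by abel]
  · intro x _
    dsimp only
    rw [show x - b + b = x from by abel]

private lemma sum_KK_sq (A P : Finset G) (b : G) :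
    ∑ b' ∈ A, (KK A P b b') ^ 2
      = ∑ δ ∈ P - P, (if b - δ ∈ A then (1 : ℕ) else 0) * (MM A P δ b) ^ 2 := by
  have h1 : ∀ b' ∈ A, (KK A P b b') ^ 2
      = if b - b' ∈ P - P then (KK A P b b') ^ 2 else 0 := by
    intro b' _
    by_cases h : KK A P b b' = 0
    · simp [h]
    · rw [if_pos (KK_support h)]
  calc ∑ b' ∈ A, (KK A P b b') ^ 2
      = ∑ b' ∈ A, if b - b' ∈ P - P then (KK A P b b') ^ 2 else 0 := sum_congr rfl h1
    _ = ∑ b' ∈ A.filter fun b' => b - b' ∈ P - P, (KK A P b b') ^ 2 := (sum_filter _ _).symm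
    _ = ∑ δ ∈ (P - P).filter fun δ => b - δ ∈ A, (MM A P δ b) ^ 2 := by
        refine sum_nbij' (i := fun b' => b - b') (j := fun δ => b - δ) ?_ ?_ ?_ ?_ ?_
        · intro b' hb'
          rw [mem_filter] at hb' ⊢
          refine ⟨hb'.2, ?_⟩
          rw [sub_sub_cancel]
          exact hb'.1
        · intro δ hδ
          rw [mem_filter] at hδ ⊢
          refine ⟨hδ.2, ?_⟩
          rw [sub_sub_cancel]
          exact hδ.1
        · intro b' _
          exact sub_sub_cancel b b'
        · intro δ _
          exact sub_sub_cancel b δ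
        · intro b' _
          rw [← KK_shift A P (b - b') b, sub_sub_cancel]
    _ = ∑ δ ∈ P - P, if b - δ ∈ A then (MM A P δ b) ^ 2 else 0 := sum_filter _ _
    _ = ∑ δ ∈ P - P, (if b - δ ∈ A then (1 : ℕ) else 0) * (MM A P δ b) ^ 2 :=
        sum_congr rfl fun δ _ => (boole_mul _ _).symm

private lemma MM_as_sum (A P : Finset G) (δ b : G) :
    MM A P δ b = ∑ x ∈ P, if x - δ ∈ P ∧ x - b ∈ A then (1 : ℕ) else 0 := by
  rw [MM, card_filter]

private lemma Q_eq (A P : Finset G) :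
    ∑ p ∈ A ×ˢ A, (KK A P p.1 p.2) ^ 2
      = ∑ t ∈ (P - P) ×ˢ P ×ˢ P, ii P t * ww A t := by
  have hRHS : ∑ t ∈ (P - P) ×ˢ P ×ˢ P, ii P t * ww A t
      = ∑ δ ∈ P - P, ∑ x ∈ P, ∑ y ∈ P, ∑ b ∈ A,
          (if (x - δ ∈ P ∧ x - b ∈ A) ∧ (y - δ ∈ P ∧ y - b ∈ A) ∧ b - δ ∈ A
            then (1 : ℕ) else 0) := by
    simp only [Finset.sum_product]
    refine sum_congr rfl fun δ _ => sum_congr rfl fun x _ => sum_congr rfl fun y _ => ?_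
    rw [ii_apply, ww_apply, card_filter, Finset.mul_sum]
    refine sum_congr rfl fun b _ => ?_
    simp only [boole_mul_boole]
    exact boole_congr (by tauto)
  rw [hRHS]
  simp only [Finset.sum_product]
  calc ∑ b ∈ A, ∑ b' ∈ A, (KK A P b b') ^ 2
      = ∑ b ∈ A, ∑ δ ∈ P - P, (if b - δ ∈ A then (1 : ℕ) else 0) * (MM A P δ b) ^ 2 :=
        sum_congr rfl fun b _ => sum_KK_sq A P b
    _ = ∑ δ ∈ P - P, ∑ b ∈ A, (if b - δ ∈ A then (1 : ℕ) else 0) * (MM A P δ b) ^ 2 :=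
        Finset.sum_comm
    _ = ∑ δ ∈ P - P, ∑ x ∈ P, ∑ y ∈ P, ∑ b ∈ A,
          (if (x - δ ∈ P ∧ x - b ∈ A) ∧ (y - δ ∈ P ∧ y - b ∈ A) ∧ b - δ ∈ A
            then (1 : ℕ) else 0) := by
        refine sum_congr rfl fun δ _ => ?_
        calc ∑ b ∈ A, (if b - δ ∈ A then (1 : ℕ) else 0) * (MM A P δ b) ^ 2
            = ∑ b ∈ A, ∑ x ∈ P, ∑ y ∈ P,
                (if b - δ ∈ A then (1 : ℕ) else 0) *
                  ((if x - δ ∈ P ∧ x - b ∈ A then (1 : ℕ) else 0) *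
                    (if y - δ ∈ P ∧ y - b ∈ A then (1 : ℕ) else 0)) := by
              refine sum_congr rfl fun b _ => ?_
              rw [MM_as_sum, sq, Finset.sum_mul_sum, Finset.mul_sum]
              refine sum_congr rfl fun x _ => ?_
              rw [Finset.mul_sum]
          _ = ∑ x ∈ P, ∑ b ∈ A, ∑ y ∈ P,
                (if b - δ ∈ A then (1 : ℕ) else 0) *
                  ((if x - δ ∈ P ∧ x - b ∈ A then (1 : ℕ) else 0) *
                    (if y - δ ∈ P ∧ y - b ∈ A then (1 : ℕ) else 0)) := Finset.sum_comm
          _ = ∑ x ∈ P, ∑ y ∈ P, ∑ b ∈ A,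
                (if b - δ ∈ A then (1 : ℕ) else 0) *
                  ((if x - δ ∈ P ∧ x - b ∈ A then (1 : ℕ) else 0) *
                    (if y - δ ∈ P ∧ y - b ∈ A then (1 : ℕ) else 0)) :=
              sum_congr rfl fun x _ => Finset.sum_comm
          _ = ∑ x ∈ P, ∑ y ∈ P, ∑ b ∈ A,
                (if (x - δ ∈ P ∧ x - b ∈ A) ∧ (y - δ ∈ P ∧ y - b ∈ A) ∧ b - δ ∈ A
                  then (1 : ℕ) else 0) := by
              refine sum_congr rfl fun x _ => sum_congr rfl fun y _ => sum_congr rfl fun b _ => ?_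
              simp only [boole_mul_boole]
              exact boole_congr (by tauto)

private lemma count_shift (P : Finset G) (δ : G) :
    ∑ x ∈ P, (if x - δ ∈ P then (1 : ℕ) else 0) = rSub P P δ := by
  rw [← card_filter, rSub]
  apply card_nbij' (i := fun x => (x, x - δ)) (j := fun q => q.1)
  · intro x hx
    rw [mem_coe, mem_filter] at hx
    dsimp only
    rw [mem_coe, mem_filter, mem_product]
    exact ⟨⟨hx.1, hx.2⟩, sub_sub_cancel x δ⟩
  · intro q hq
    rw [mem_coe, mem_filter, mem_product] at hq
    dsimp only
    rw [mem_coe, mem_filter]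
    refine ⟨hq.1.1, ?_⟩
    have e1 : q.1 - δ = q.2 := by rw [← hq.2]; abel
    rw [e1]
    exact hq.1.2
  · intro x _; rfl
  · rintro ⟨q1, q2⟩ hq
    rw [mem_coe, mem_filter, mem_product] at hq
    dsimp only
    have e1 : q1 - δ = q2 := by
      have h2 := hq.2
      simp only at h2
      rw [← h2]; abel
    rw [Prod.mk.injEq]
    exact ⟨rfl, e1⟩

private lemma sum_ii (P : Finset G) :
    ∑ t ∈ (P - P) ×ˢ P ×ˢ P, ii P t = E2 P P := by
  simp only [Finset.sum_product, ii_apply, E2]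
  refine sum_congr rfl fun δ _ => ?_
  have h1 : ∀ x y : G, (if x - δ ∈ P ∧ y - δ ∈ P then (1 : ℕ) else 0)
      = (if x - δ ∈ P then (1 : ℕ) else 0) * (if y - δ ∈ P then 1 else 0) :=
    fun x y => (boole_mul_boole _ _).symm
  simp only [h1]
  rw [← Finset.sum_mul_sum, count_shift, sq]

private lemma count_delta (A : Finset G) {b b' : G} (hb : b ∈ A) (hb' : b' ∈ A) :
    ∑ δ ∈ A - A, (if b - δ ∈ A ∧ b' - δ ∈ A then (1 : ℕ) else 0) = rSub A A (b - b') := by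
  rw [← card_filter, rSub]
  apply card_nbij' (i := fun δ => (b - δ, b' - δ)) (j := fun q => b - q.1)
  · intro δ hδ
    rw [mem_coe, mem_filter] at hδ
    dsimp only
    rw [mem_coe, mem_filter, mem_product]
    exact ⟨⟨hδ.2.1, hδ.2.2⟩, show (b - δ) - (b' - δ) = b - b' from by abel⟩
  · rintro ⟨q1, q2⟩ hq
    rw [mem_coe, mem_filter, mem_product] at hq
    simp only at hq
    dsimp only
    rw [mem_coe, mem_filter]
    refine ⟨Finset.sub_mem_sub hb hq.1.1, ?_, ?_⟩
    · rw [sub_sub_cancel]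
      exact hq.1.1
    · rw [show b' - (b - q1) = q1 - (b - b') from by abel, ← hq.2]
      rw [show q1 - (q1 - q2) = q2 from by abel]
      exact hq.1.2
  · intro δ _
    exact sub_sub_cancel b δ
  · rintro ⟨q1, q2⟩ hq
    rw [mem_coe, mem_filter, mem_product] at hq
    simp only at hq
    dsimp only
    rw [Prod.mk.injEq]
    constructor
    · exact sub_sub_cancel b q1
    · show b' - (b - q1) = q2
      rw [show b' - (b - q1) = q1 - (b - b') from by abel, ← hq.2]
      abel

private lemma count_x (A : Finset G) {b b' : G} (hb : b ∈ A) (hb' : b' ∈ A) :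
    ∑ x ∈ A + A, (if x - b ∈ A ∧ x - b' ∈ A then (1 : ℕ) else 0) = rSub A A (b - b') := by
  rw [← card_filter, rSub]
  apply card_nbij' (i := fun x => (x - b', x - b)) (j := fun q => q.2 + b)
  · intro x hx
    rw [mem_coe, mem_filter] at hx
    dsimp only
    rw [mem_coe, mem_filter, mem_product]
    exact ⟨⟨hx.2.2, hx.2.1⟩, show (x - b') - (x - b) = b - b' from by abel⟩
  · rintro ⟨q1, q2⟩ hq
    rw [mem_coe, mem_filter, mem_product] at hq
    simp only at hq
    dsimp only
    rw [mem_coe, mem_filter]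
    refine ⟨Finset.add_mem_add hq.1.2 hb, ?_, ?_⟩
    · rw [show q2 + b - b = q2 from by abel]
      exact hq.1.2
    · rw [show q2 + b - b' = q2 + (b - b') from by abel, ← hq.2]
      rw [show q2 + (q1 - q2) = q1 from by abel]
      exact hq.1.1
  · intro x _
    show x - b + b = x
    abel
  · rintro ⟨q1, q2⟩ hq
    rw [mem_coe, mem_filter, mem_product] at hq
    simp only at hq
    dsimp only
    rw [Prod.mk.injEq]
    constructor
    · show q2 + b - b' = q1
      rw [show q2 + b - b' = q2 + (b - b') from by abel, ← hq.2]
      abel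
    · show q2 + b - b = q2
      abel

private lemma sum_sub_fiber (A : Finset G) (f : G → ℕ) :
    ∑ p ∈ A ×ˢ A, f (p.1 - p.2) = ∑ δ ∈ A - A, rSub A A δ * f δ := by
  have hmaps : ∀ p ∈ A ×ˢ A, p.1 - p.2 ∈ A - A := by
    intro p hp
    rw [mem_product] at hp
    exact Finset.sub_mem_sub hp.1 hp.2
  rw [← Finset.sum_fiberwise_of_maps_to hmaps (fun p => f (p.1 - p.2))]
  refine sum_congr rfl fun δ _ => ?_
  have h1 : ∀ p ∈ (A ×ˢ A).filter fun p => p.1 - p.2 = δ, f (p.1 - p.2) = f δ := by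
    intro p hp
    rw [(mem_filter.mp hp).2]
  rw [sum_congr rfl h1, sum_const, smul_eq_mul, rSub]


private lemma sum_ww_sq_eq (A : Finset G) :
    ∑ t ∈ (A - A) ×ˢ (A + A) ×ˢ (A + A), (ww A t) ^ 2 = E4 A A := by
  have h1 : ∀ δ x y : G, (ww A (δ, x, y)) ^ 2
      = ∑ p ∈ A ×ˢ A,
          ((if p.1 - δ ∈ A ∧ p.2 - δ ∈ A then (1 : ℕ) else 0) *
            ((if x - p.1 ∈ A ∧ x - p.2 ∈ A then (1 : ℕ) else 0) *
              (if y - p.1 ∈ A ∧ y - p.2 ∈ A then (1 : ℕ) else 0))) := by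
    intro δ x y
    rw [ww_apply, card_filter, sq, Finset.sum_mul_sum]
    simp only [Finset.sum_product]
    refine sum_congr rfl fun b _ => sum_congr rfl fun b' _ => ?_
    simp only [boole_mul_boole]
    exact boole_congr (by tauto)
  simp only [Finset.sum_product]
  simp only [h1]
  calc ∑ δ ∈ A - A, ∑ x ∈ A + A, ∑ y ∈ A + A, ∑ p ∈ A ×ˢ A,
          ((if p.1 - δ ∈ A ∧ p.2 - δ ∈ A then (1 : ℕ) else 0) *
            ((if x - p.1 ∈ A ∧ x - p.2 ∈ A then (1 : ℕ) else 0) *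
              (if y - p.1 ∈ A ∧ y - p.2 ∈ A then (1 : ℕ) else 0)))
      = ∑ δ ∈ A - A, ∑ x ∈ A + A, ∑ p ∈ A ×ˢ A, ∑ y ∈ A + A,
          ((if p.1 - δ ∈ A ∧ p.2 - δ ∈ A then (1 : ℕ) else 0) *
            ((if x - p.1 ∈ A ∧ x - p.2 ∈ A then (1 : ℕ) else 0) *
              (if y - p.1 ∈ A ∧ y - p.2 ∈ A then (1 : ℕ) else 0))) :=
        sum_congr rfl fun δ _ => sum_congr rfl fun x _ => Finset.sum_comm
    _ = ∑ δ ∈ A - A, ∑ p ∈ A ×ˢ A, ∑ x ∈ A + A, ∑ y ∈ A + A,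
          ((if p.1 - δ ∈ A ∧ p.2 - δ ∈ A then (1 : ℕ) else 0) *
            ((if x - p.1 ∈ A ∧ x - p.2 ∈ A then (1 : ℕ) else 0) *
              (if y - p.1 ∈ A ∧ y - p.2 ∈ A then (1 : ℕ) else 0))) :=
        sum_congr rfl fun δ _ => Finset.sum_comm
    _ = ∑ p ∈ A ×ˢ A, ∑ δ ∈ A - A, ∑ x ∈ A + A, ∑ y ∈ A + A,
          ((if p.1 - δ ∈ A ∧ p.2 - δ ∈ A then (1 : ℕ) else 0) *
            ((if x - p.1 ∈ A ∧ x - p.2 ∈ A then (1 : ℕ) else 0) *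
              (if y - p.1 ∈ A ∧ y - p.2 ∈ A then (1 : ℕ) else 0))) := Finset.sum_comm
    _ = ∑ p ∈ A ×ˢ A, rSub A A (p.1 - p.2) ^ 3 := by
        refine sum_congr rfl fun p hp => ?_
        rw [mem_product] at hp
        calc ∑ δ ∈ A - A, ∑ x ∈ A + A, ∑ y ∈ A + A,
              ((if p.1 - δ ∈ A ∧ p.2 - δ ∈ A then (1 : ℕ) else 0) *
                ((if x - p.1 ∈ A ∧ x - p.2 ∈ A then (1 : ℕ) else 0) *
                  (if y - p.1 ∈ A ∧ y - p.2 ∈ A then (1 : ℕ) else 0)))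
            = ∑ δ ∈ A - A, (if p.1 - δ ∈ A ∧ p.2 - δ ∈ A then (1 : ℕ) else 0) *
                (rSub A A (p.1 - p.2) * rSub A A (p.1 - p.2)) := by
              refine sum_congr rfl fun δ _ => ?_
              rw [← count_x A hp.1 hp.2]
              rw [Finset.sum_mul_sum, Finset.mul_sum]
              refine sum_congr rfl fun x _ => ?_
              rw [Finset.mul_sum]
          _ = (∑ δ ∈ A - A, (if p.1 - δ ∈ A ∧ p.2 - δ ∈ A then (1 : ℕ) else 0)) *
                (rSub A A (p.1 - p.2) * rSub A A (p.1 - p.2)) := by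
              rw [Finset.sum_mul]
          _ = rSub A A (p.1 - p.2) ^ 3 := by
              rw [count_delta A hp.1 hp.2]
              ring
    _ = E4 A A := by
        rw [sum_sub_fiber A (fun δ => rSub A A δ ^ 3), E4]
        exact sum_congr rfl fun δ _ => by ring

private lemma ww_support {A : Finset G} {t : G × G × G} (h : ww A t ≠ 0) :
    t ∈ (A - A) ×ˢ (A + A) ×ˢ (A + A) := by
  obtain ⟨b, hb⟩ := Finset.card_pos.mp (Nat.pos_of_ne_zero h)
  rw [mem_filter] at hb
  obtain ⟨hbA, h1, h2, h3⟩ := hb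
  refine mem_product.mpr ⟨?_, mem_product.mpr ⟨?_, ?_⟩⟩
  · have h4 := Finset.sub_mem_sub hbA h3
    rwa [sub_sub_cancel] at h4
  · have h4 := Finset.add_mem_add h1 hbA
    rwa [show t.2.1 - b + b = t.2.1 from by abel] at h4
  · have h4 := Finset.add_mem_add h2 hbA
    rwa [show t.2.2 - b + b = t.2.2 from by abel] at h4

private lemma sum_ww_sq_le (A P : Finset G) :
    ∑ t ∈ (P - P) ×ˢ P ×ˢ P, (ww A t) ^ 2 ≤ E4 A A := by
  rw [← sum_ww_sq_eq A, ← Finset.sum_filter_ne_zero ((P - P) ×ˢ P ×ˢ P)]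
  apply Finset.sum_le_sum_of_subset
  intro t ht
  rw [mem_filter] at ht
  have h : ww A t ≠ 0 := by
    intro h0
    exact ht.2 (by rw [h0]; ring)
  exact ww_support h

end Aux

/-- **Eigenvalue lemma, sum version.** For any `P ⊆ A + A`,
`(Σ_{x ∈ P} r_{A+A}(x))^8 ≤ |A|^8 · E_4^+(A) · E^+(P)`. -/
theorem sum_rAdd_pow_eight_le {G : Type*} [AddCommGroup G] [DecidableEq G]
    (A P : Finset G) (hA : A.Nonempty) (hP : P ⊆ A + A) :
    (∑ x ∈ P, rAdd A A x) ^ 8 ≤ A.card ^ 8 * E4 A A * E2 P P := by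
  have h1 : (∑ x ∈ P, rAdd A A x) ^ 2 ≤ A.card * ∑ p ∈ A ×ˢ A, KK A P p.1 p.2 := by
    rw [sum_rAdd_eq A P, ← sum_sq_eq A P]
    have hcs := sq_sum_le_card_mul_sum_sq (s := A)
      (f := fun a => ∑ b ∈ A, if a + b ∈ P then (1 : ℕ) else 0)
    rw [Nat.cast_id] at hcs
    calc (∑ p ∈ A ×ˢ A, if p.1 + p.2 ∈ P then (1 : ℕ) else 0) ^ 2
        = (∑ a ∈ A, ∑ b ∈ A, if a + b ∈ P then (1 : ℕ) else 0) ^ 2 := by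
          simp only [Finset.sum_product]
      _ ≤ A.card * ∑ a ∈ A, (∑ b ∈ A, if a + b ∈ P then (1 : ℕ) else 0) ^ 2 := hcs
  have h2 : (∑ p ∈ A ×ˢ A, KK A P p.1 p.2) ^ 2
      ≤ A.card ^ 2 * ∑ p ∈ A ×ˢ A, (KK A P p.1 p.2) ^ 2 := by
    have hcs := sq_sum_le_card_mul_sum_sq (s := A ×ˢ A) (f := fun p => KK A P p.1 p.2)
    rw [Nat.cast_id, card_product] at hcs
    calc (∑ p ∈ A ×ˢ A, KK A P p.1 p.2) ^ 2
        ≤ (A.card * A.card) * ∑ p ∈ A ×ˢ A, (KK A P p.1 p.2) ^ 2 := hcs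
      _ = A.card ^ 2 * ∑ p ∈ A ×ˢ A, (KK A P p.1 p.2) ^ 2 := by ring
  have h3 : (∑ p ∈ A ×ˢ A, (KK A P p.1 p.2) ^ 2) ^ 2 ≤ E4 A A * E2 P P := by
    rw [Q_eq A P]
    calc (∑ t ∈ (P - P) ×ˢ P ×ˢ P, ii P t * ww A t) ^ 2
        ≤ (∑ t ∈ (P - P) ×ˢ P ×ˢ P, (ii P t) ^ 2) *
            ∑ t ∈ (P - P) ×ˢ P ×ˢ P, (ww A t) ^ 2 :=
          Finset.sum_mul_sq_le_sq_mul_sq _ _ _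
      _ = (∑ t ∈ (P - P) ×ˢ P ×ˢ P, ii P t) *
            ∑ t ∈ (P - P) ×ˢ P ×ˢ P, (ww A t) ^ 2 := by
          congr 1
          refine sum_congr rfl fun t _ => ?_
          rw [ii]
          split_ifs <;> norm_num
      _ ≤ E2 P P * E4 A A := by
          rw [sum_ii P]
          exact Nat.mul_le_mul_left _ (sum_ww_sq_le A P)
      _ = E4 A A * E2 P P := mul_comm _ _
  calc (∑ x ∈ P, rAdd A A x) ^ 8 = ((∑ x ∈ P, rAdd A A x) ^ 2) ^ 4 := by ring
    _ ≤ (A.card * ∑ p ∈ A ×ˢ A, KK A P p.1 p.2) ^ 4 := Nat.pow_le_pow_left h1 4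
    _ = A.card ^ 4 * ((∑ p ∈ A ×ˢ A, KK A P p.1 p.2) ^ 2) ^ 2 := by ring
    _ ≤ A.card ^ 4 * (A.card ^ 2 * ∑ p ∈ A ×ˢ A, (KK A P p.1 p.2) ^ 2) ^ 2 :=
        Nat.mul_le_mul_left _ (Nat.pow_le_pow_left h2 2)
    _ = A.card ^ 8 * (∑ p ∈ A ×ˢ A, (KK A P p.1 p.2) ^ 2) ^ 2 := by ring
    _ ≤ A.card ^ 8 * (E4 A A * E2 P P) := Nat.mul_le_mul_left _ h3
    _ = A.card ^ 8 * E4 A A * E2 P P := by ring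
end

section
/- Let G be an abelian group, let A ⊆ G be a finite nonempty set, and let P be any finite subset of A − A. Then (Σ_{x ∈ P} r_{A−A}(x))^8 ≤ |A|^8 · E_4^+(A) · E^+(P). -/
open Finset
open scoped Pointwise

namespace EigenAux

/-- Cauchy–Schwarz over `ℕ` : `(∑ h)^2 ≤ card * ∑ h^2`. -/
lemma cs_nat {α : Type*} (s : Finset α) (h : α → ℕ) :
    (∑ i ∈ s, h i) ^ 2 ≤ s.card * ∑ i ∈ s, h i ^ 2 := by
  have H := Finset.sum_mul_sq_le_sq_mul_sq s (fun _ => (1 : ℕ)) h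
  simpa using H

variable {G : Type*} [AddCommGroup G] [DecidableEq G]

/-- The set of "4-cycles": tuples `((c,c'),(a,a')) ∈ A⁴` with all four differences
`c−a, c'−a, c−a', c'−a'` in `P`. -/
def Cyc (A P : Finset G) : Finset ((G × G) × (G × G)) :=
  ((A ×ˢ A) ×ˢ (A ×ˢ A)).filter fun W =>
    (W.1.1 - W.2.1 ∈ P ∧ W.1.2 - W.2.1 ∈ P) ∧ (W.1.1 - W.2.2 ∈ P ∧ W.1.2 - W.2.2 ∈ P)

/-- The difference profile of a 4-cycle. -/
def Φf : (G × G) × (G × G) → (G × G) × (G × G) := fun W =>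
  ((W.1.1 - W.2.1, W.1.2 - W.2.1), (W.1.1 - W.2.2, W.1.2 - W.2.2))

/-- Quadruples `((u₁,u₂),(u₃,u₄)) ∈ P⁴` with `u₁ − u₂ = u₃ − u₄`; there are exactly `E2 P P`
of them. -/
def QuadP (P : Finset G) : Finset ((G × G) × (G × G)) :=
  ((P ×ˢ P) ×ˢ (P ×ˢ P)).filter fun v => v.1.1 - v.1.2 = v.2.1 - v.2.2

/-- Octuples consisting of four pairs from `A × A`, all with the same difference;
there are exactly `E4 A A` of them. -/
def Q4 (A : Finset G) : Finset (((G × G) × (G × G)) × ((G × G) × (G × G))) :=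
  (((A ×ˢ A) ×ˢ (A ×ˢ A)) ×ˢ ((A ×ˢ A) ×ˢ (A ×ˢ A))).filter fun z =>
    (z.1.1.1 - z.1.1.2 = z.1.2.1 - z.1.2.2) ∧ (z.1.1.1 - z.1.1.2 = z.2.1.1 - z.2.1.2) ∧
      (z.1.1.1 - z.1.1.2 = z.2.2.1 - z.2.2.2)

lemma L_sigma (A P : Finset G) :
    ∑ x ∈ P, rSub A A x = ∑ a ∈ A, (A.filter fun c => c - a ∈ P).card := by
  simp only [rSub, Finset.card_filter]
  conv_lhs => rw [Finset.sum_comm]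
  have h1 : ∀ ab : G × G, (∑ x ∈ P, if ab.1 - ab.2 = x then (1 : ℕ) else 0)
      = if ab.1 - ab.2 ∈ P then 1 else 0 := fun ab => Finset.sum_ite_eq P (ab.1 - ab.2) fun _ => 1
  rw [Finset.sum_congr rfl fun ab _ => h1 ab, Finset.sum_product]
  exact Finset.sum_comm

lemma L_S2 (A P : Finset G) :
    ∑ a ∈ A, ((A.filter fun c => c - a ∈ P).card) ^ 2
      = ∑ q ∈ A ×ˢ A, (A.filter fun b => q.1 - b ∈ P ∧ q.2 - b ∈ P).card := by
  have h1 : ∀ a : G, ((A.filter fun c => c - a ∈ P).card) ^ 2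
      = ((A ×ˢ A).filter fun q => q.1 - a ∈ P ∧ q.2 - a ∈ P).card := by
    intro a
    have h : ((A ×ˢ A).filter fun q => q.1 - a ∈ P ∧ q.2 - a ∈ P)
        = (A.filter fun c => c - a ∈ P) ×ˢ (A.filter fun c => c - a ∈ P) := by
      ext ⟨y1, y2⟩
      simp only [Finset.mem_filter, Finset.mem_product]
      tauto
    rw [h, Finset.card_product, sq]
  rw [Finset.sum_congr rfl fun a _ => h1 a]
  simp only [Finset.card_filter]
  exact Finset.sum_comm

lemma L_S4 (A P : Finset G) :
    ∑ q ∈ A ×ˢ A, ((A.filter fun b => q.1 - b ∈ P ∧ q.2 - b ∈ P).card) ^ 2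
      = (Cyc A P).card := by
  have h1 : ∀ q : G × G, ((A.filter fun b => q.1 - b ∈ P ∧ q.2 - b ∈ P).card) ^ 2
      = ((A ×ˢ A).filter fun r =>
          (q.1 - r.1 ∈ P ∧ q.2 - r.1 ∈ P) ∧ (q.1 - r.2 ∈ P ∧ q.2 - r.2 ∈ P)).card := by
    intro q
    have h : ((A ×ˢ A).filter fun r =>
          (q.1 - r.1 ∈ P ∧ q.2 - r.1 ∈ P) ∧ (q.1 - r.2 ∈ P ∧ q.2 - r.2 ∈ P))
        = (A.filter fun b => q.1 - b ∈ P ∧ q.2 - b ∈ P) ×ˢ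
          (A.filter fun b => q.1 - b ∈ P ∧ q.2 - b ∈ P) := by
      ext ⟨y1, y2⟩
      simp only [Finset.mem_filter, Finset.mem_product]
      tauto
    rw [h, Finset.card_product, sq]
  rw [Finset.sum_congr rfl fun q _ => h1 q]
  simp only [Cyc]
  conv_rhs => rw [Finset.card_filter, Finset.sum_product]
  simp only [Finset.card_filter]

/-- Cauchy–Schwarz for the fibration of a finset by a map `Φ`. -/
lemma card_sq_le {α β : Type*} [DecidableEq α] [DecidableEq β] (S : Finset α) (Φ : α → β) :
    S.card ^ 2 ≤ (S.image Φ).card * ((S ×ˢ S).filter fun z => Φ z.1 = Φ z.2).card := by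
  have h1 : S.card = ∑ u ∈ S.image Φ, (S.filter fun a => Φ a = u).card :=
    Finset.card_eq_sum_card_image Φ S
  have h2 : ((S ×ˢ S).filter fun z => Φ z.1 = Φ z.2).card
      = ∑ u ∈ S.image Φ, ((S.filter fun a => Φ a = u).card) ^ 2 := by
    rw [Finset.card_eq_sum_card_fiberwise (f := fun z : α × α => Φ z.1) (t := S.image Φ)
      (fun z hz => by
        simp only [Finset.mem_coe, Finset.mem_filter, Finset.mem_product] at hz
        exact Finset.mem_image_of_mem Φ hz.1.1)]
    refine Finset.sum_congr rfl fun u hu => ?_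
    have h3 : ((S ×ˢ S).filter fun z => Φ z.1 = Φ z.2).filter (fun z => Φ z.1 = u)
        = (S.filter fun a => Φ a = u) ×ˢ (S.filter fun a => Φ a = u) := by
      ext ⟨z1, z2⟩
      simp only [Finset.mem_filter, Finset.mem_product]
      constructor
      · rintro ⟨⟨⟨hz1, hz2⟩, he⟩, hu1⟩
        exact ⟨⟨hz1, hu1⟩, hz2, he.symm.trans hu1⟩
      · rintro ⟨⟨hz1, hu1⟩, hz2, hu2⟩
        exact ⟨⟨⟨hz1, hz2⟩, hu1.trans hu2.symm⟩, hu1⟩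
    rw [h3, Finset.card_product, sq]
  rw [h1, h2]
  exact cs_nat _ _

lemma L_img (A P : Finset G) : (Cyc A P).image Φf ⊆ QuadP P := by
  intro u hu
  simp only [Finset.mem_image] at hu
  obtain ⟨W, hW, rfl⟩ := hu
  obtain ⟨⟨c, c'⟩, a, a'⟩ := W
  simp only [Cyc, Finset.mem_filter, Finset.mem_product] at hW
  obtain ⟨-, ⟨h1, h2⟩, h3, h4⟩ := hW
  simp only [QuadP, Φf, Finset.mem_filter, Finset.mem_product]
  exact ⟨⟨⟨h1, h2⟩, h3, h4⟩, by abel⟩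

lemma L_E2 (P : Finset G) : E2 P P = (QuadP P).card := by
  have hfib : (QuadP P).card
      = ∑ x ∈ P - P, ((QuadP P).filter fun v => v.1.1 - v.1.2 = x).card := by
    apply Finset.card_eq_sum_card_fiberwise
    intro v hv
    simp only [Finset.mem_coe, QuadP, Finset.mem_filter, Finset.mem_product] at hv
    exact Finset.sub_mem_sub hv.1.1.1 hv.1.1.2
  rw [E2, hfib]
  refine Finset.sum_congr rfl fun x hx => ?_
  have hset : (QuadP P).filter (fun v => v.1.1 - v.1.2 = x)
      = ((P ×ˢ P).filter fun w => w.1 - w.2 = x) ×ˢ ((P ×ˢ P).filter fun w => w.1 - w.2 = x) := by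
    ext ⟨⟨u1, u2⟩, u3, u4⟩
    simp only [QuadP, Finset.mem_filter, Finset.mem_product]
    constructor
    · rintro ⟨⟨⟨⟨h1, h2⟩, h3, h4⟩, he⟩, hx1⟩
      exact ⟨⟨⟨h1, h2⟩, hx1⟩, ⟨h3, h4⟩, he.symm.trans hx1⟩
    · rintro ⟨⟨⟨h1, h2⟩, hx1⟩, ⟨h3, h4⟩, hx2⟩
      exact ⟨⟨⟨⟨h1, h2⟩, h3, h4⟩, hx1.trans hx2.symm⟩, hx1⟩
  rw [hset, Finset.card_product, sq]
  rfl

lemma L_E4 (A : Finset G) : E4 A A = (Q4 A).card := by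
  have hfib : (Q4 A).card
      = ∑ x ∈ A - A, ((Q4 A).filter fun z => z.1.1.1 - z.1.1.2 = x).card := by
    apply Finset.card_eq_sum_card_fiberwise
    intro z hz
    simp only [Finset.mem_coe, Q4, Finset.mem_filter, Finset.mem_product] at hz
    exact Finset.sub_mem_sub hz.1.1.1.1 hz.1.1.1.2
  rw [E4, hfib]
  refine Finset.sum_congr rfl fun x hx => ?_
  have hset : (Q4 A).filter (fun z => z.1.1.1 - z.1.1.2 = x)
      = (((A ×ˢ A) ×ˢ (A ×ˢ A)).filter fun w => w.1.1 - w.1.2 = x ∧ w.2.1 - w.2.2 = x) ×ˢ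
        (((A ×ˢ A) ×ˢ (A ×ˢ A)).filter fun w => w.1.1 - w.1.2 = x ∧ w.2.1 - w.2.2 = x) := by
    ext ⟨⟨⟨b1, b2⟩, b3, b4⟩, ⟨b5, b6⟩, b7, b8⟩
    simp only [Q4, Finset.mem_filter, Finset.mem_product]
    constructor
    · rintro ⟨⟨⟨⟨⟨g1, g2⟩, g3, g4⟩, ⟨g5, g6⟩, g7, g8⟩, e2, e3, e4⟩, e1⟩
      exact ⟨⟨⟨⟨g1, g2⟩, g3, g4⟩, e1, e2.symm.trans e1⟩,
        ⟨⟨g5, g6⟩, g7, g8⟩, e3.symm.trans e1, e4.symm.trans e1⟩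
    · rintro ⟨⟨⟨⟨g1, g2⟩, g3, g4⟩, e1, e2⟩, ⟨⟨g5, g6⟩, g7, g8⟩, e3, e4⟩
      exact ⟨⟨⟨⟨⟨g1, g2⟩, g3, g4⟩, ⟨g5, g6⟩, g7, g8⟩,
        e1.trans e2.symm, e1.trans e3.symm, e1.trans e4.symm⟩, e1⟩
  have h4 : (((A ×ˢ A) ×ˢ (A ×ˢ A)).filter fun w => w.1.1 - w.1.2 = x ∧ w.2.1 - w.2.2 = x)
      = ((A ×ˢ A).filter fun u => u.1 - u.2 = x) ×ˢ ((A ×ˢ A).filter fun u => u.1 - u.2 = x) := by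
    ext ⟨⟨y1, y2⟩, y3, y4⟩
    simp only [Finset.mem_filter, Finset.mem_product]
    tauto
  rw [hset, h4, Finset.card_product, Finset.card_product]
  simp only [rSub]
  ring

lemma L_pairs (A P : Finset G) :
    (((Cyc A P) ×ˢ (Cyc A P)).filter fun z => Φf z.1 = Φf z.2).card ≤ (Q4 A).card := by
  apply Finset.card_le_card_of_injOn
    (fun z => (((z.1.2.1, z.2.2.1), (z.1.2.2, z.2.2.2)), ((z.1.1.1, z.2.1.1), (z.1.1.2, z.2.1.2))))
  · rintro ⟨⟨⟨c, c'⟩, a, a'⟩, ⟨⟨tc, tc'⟩, ta, ta'⟩⟩ hz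
    simp only [Finset.mem_coe, Cyc, Φf, Finset.mem_filter, Finset.mem_product, Prod.mk.injEq] at hz
    obtain ⟨⟨⟨⟨⟨hc, hc'⟩, ha, ha'⟩, -⟩, ⟨⟨htc, htc'⟩, hta, hta'⟩, -⟩, ⟨e1, e2⟩, e3, e4⟩ := hz
    simp only [Finset.mem_coe, Q4, Finset.mem_filter, Finset.mem_product]
    have h1 : a - ta = c - tc := (sub_eq_sub_iff_sub_eq_sub.mp e1).symm
    have h2 : a - ta = c' - tc' := (sub_eq_sub_iff_sub_eq_sub.mp e2).symm
    have h3 : a' - ta' = c - tc := (sub_eq_sub_iff_sub_eq_sub.mp e3).symm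
    exact ⟨⟨⟨⟨ha, hta⟩, ha', hta'⟩, ⟨hc, htc⟩, hc', htc'⟩,
      h1.trans h3.symm, h1, h2⟩
  · rintro ⟨⟨⟨c1, c1'⟩, a1, a1'⟩, ⟨⟨tc1, tc1'⟩, ta1, ta1'⟩⟩ -
      ⟨⟨⟨c2, c2'⟩, a2, a2'⟩, ⟨⟨tc2, tc2'⟩, ta2, ta2'⟩⟩ - h
    simp only [Prod.mk.injEq] at h ⊢
    tauto

end EigenAux

/-- **Eigenvalue lemma, difference version.** For any `P ⊆ A − A`,
`(Σ_{x ∈ P} r_{A−A}(x))^8 ≤ |A|^8 · E_4^+(A) · E^+(P)`. -/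
theorem sum_rSub_pow_eight_le {G : Type*} [AddCommGroup G] [DecidableEq G]
    (A P : Finset G) (hA : A.Nonempty) (hP : P ⊆ A - A) :
    (∑ x ∈ P, rSub A A x) ^ 8 ≤ A.card ^ 8 * E4 A A * E2 P P := by
  classical
  have cs1 : (∑ x ∈ P, rSub A A x) ^ 2
      ≤ A.card * ∑ a ∈ A, ((A.filter fun c => c - a ∈ P).card) ^ 2 := by
    rw [EigenAux.L_sigma A P]
    exact EigenAux.cs_nat A _
  have cs2 : (∑ q ∈ A ×ˢ A, (A.filter fun b => q.1 - b ∈ P ∧ q.2 - b ∈ P).card) ^ 2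
      ≤ A.card ^ 2 *
        ∑ q ∈ A ×ˢ A, ((A.filter fun b => q.1 - b ∈ P ∧ q.2 - b ∈ P).card) ^ 2 := by
    have h := EigenAux.cs_nat (A ×ˢ A)
      (fun q => (A.filter fun b => q.1 - b ∈ P ∧ q.2 - b ∈ P).card)
    rwa [Finset.card_product, ← sq] at h
  have cs3 := EigenAux.card_sq_le (EigenAux.Cyc A P) (EigenAux.Φf (G := G))
  have hUb : ((EigenAux.Cyc A P).image EigenAux.Φf).card ≤ E2 P P := by
    rw [EigenAux.L_E2 P]
    exact Finset.card_le_card (EigenAux.L_img A P)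
  have hPb : (((EigenAux.Cyc A P) ×ˢ (EigenAux.Cyc A P)).filter
      fun z => EigenAux.Φf z.1 = EigenAux.Φf z.2).card ≤ E4 A A := by
    rw [EigenAux.L_E4 A]
    exact EigenAux.L_pairs A P
  calc (∑ x ∈ P, rSub A A x) ^ 8
      = ((∑ x ∈ P, rSub A A x) ^ 2) ^ 4 := by ring
    _ ≤ (A.card * ∑ a ∈ A, ((A.filter fun c => c - a ∈ P).card) ^ 2) ^ 4 :=
        Nat.pow_le_pow_left cs1 4
    _ = A.card ^ 4 * ((∑ a ∈ A, ((A.filter fun c => c - a ∈ P).card) ^ 2) ^ 2) ^ 2 := by ring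
    _ = A.card ^ 4 *
        ((∑ q ∈ A ×ˢ A, (A.filter fun b => q.1 - b ∈ P ∧ q.2 - b ∈ P).card) ^ 2) ^ 2 := by
        rw [EigenAux.L_S2 A P]
    _ ≤ A.card ^ 4 * (A.card ^ 2 *
        ∑ q ∈ A ×ˢ A, ((A.filter fun b => q.1 - b ∈ P ∧ q.2 - b ∈ P).card) ^ 2) ^ 2 :=
        Nat.mul_le_mul_left _ (Nat.pow_le_pow_left cs2 2)
    _ = A.card ^ 8 *
        (∑ q ∈ A ×ˢ A, ((A.filter fun b => q.1 - b ∈ P ∧ q.2 - b ∈ P).card) ^ 2) ^ 2 := by ring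
    _ = A.card ^ 8 * (EigenAux.Cyc A P).card ^ 2 := by rw [EigenAux.L_S4 A P]
    _ ≤ A.card ^ 8 * (((EigenAux.Cyc A P).image EigenAux.Φf).card *
        (((EigenAux.Cyc A P) ×ˢ (EigenAux.Cyc A P)).filter
          fun z => EigenAux.Φf z.1 = EigenAux.Φf z.2).card) :=
        Nat.mul_le_mul_left _ cs3
    _ ≤ A.card ^ 8 * (E2 P P * E4 A A) :=
        Nat.mul_le_mul_left _ (Nat.mul_le_mul hUb hPb)
    _ = A.card ^ 8 * E4 A A * E2 P P := by ring
end

section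
/- Let G be an abelian group, let A ⊆ G be a finite set, and let P ⊆ G be a finite set. Then (Σ_{x, y, z, w ∈ A} 1_P(x + y) · 1_P(y + z) · 1_P(z + w) · 1_P(w + x))^2 ≤ E^+(P) · E_4^+(A), where 1_P is the indicator function of P. -/
open Finset
open scoped Pointwise

section Aux
variable {G : Type*} [AddCommGroup G] [DecidableEq G]

/-- The finset of additive quadruples of `P`. -/
def quad (P : Finset G) : Finset (G × G × G × G) :=
  (P ×ˢ P ×ˢ P ×ˢ P).filter fun q => q.1 - q.2.1 = q.2.2.2 - q.2.2.1

/-- The fiber of `x ∈ A` over a quadruple. -/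
def fib (A : Finset G) (q : G × G × G × G) : Finset G :=
  A.filter fun x => q.1 - x ∈ A ∧ x - (q.1 - q.2.1) ∈ A ∧ q.2.2.2 - x ∈ A

lemma mem_quad {P : Finset G} {q : G × G × G × G} :
    q ∈ quad P ↔ (q.1 ∈ P ∧ q.2.1 ∈ P ∧ q.2.2.1 ∈ P ∧ q.2.2.2 ∈ P) ∧
      q.1 - q.2.1 = q.2.2.2 - q.2.2.1 := by
  simp [quad, Finset.mem_filter, Finset.mem_product, and_assoc]

lemma mem_fib {A : Finset G} {q : G × G × G × G} {x : G} :
    x ∈ fib A q ↔ x ∈ A ∧ q.1 - x ∈ A ∧ x - (q.1 - q.2.1) ∈ A ∧ q.2.2.2 - x ∈ A := by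
  simp [fib, Finset.mem_filter]

lemma ite_mul_four {p1 p2 p3 p4 : Prop} [Decidable p1] [Decidable p2] [Decidable p3]
    [Decidable p4] :
    (if p1 then (1 : ℕ) else 0) * (if p2 then 1 else 0) * (if p3 then 1 else 0) *
      (if p4 then 1 else 0) = if p1 ∧ p2 ∧ p3 ∧ p4 then 1 else 0 := by
  split_ifs <;> simp_all

lemma E2_eq_card (B : Finset G) :
    E2 B B = (((B ×ˢ B) ×ˢ (B ×ˢ B)).filter fun p =>
      p.1.1 - p.1.2 = p.2.1 - p.2.2).card := by
  rw [E2, Finset.card_eq_sum_card_fiberwise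
    (f := fun p : (G × G) × (G × G) => p.1.1 - p.1.2) (t := B - B) (fun p hp => by
      simp only [mem_filter, mem_product, mem_coe] at hp
      exact sub_mem_sub hp.1.1.1 hp.1.1.2)]
  refine sum_congr rfl fun x hx => ?_
  rw [filter_filter]
  have h : (((B ×ˢ B) ×ˢ (B ×ˢ B)).filter fun p =>
      (p.1.1 - p.1.2 = p.2.1 - p.2.2) ∧ p.1.1 - p.1.2 = x)
      = ((B ×ˢ B).filter fun ab => ab.1 - ab.2 = x) ×ˢ
        ((B ×ˢ B).filter fun ab => ab.1 - ab.2 = x) := by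
    rw [← filter_product]
    exact filter_congr fun p _ => by constructor <;> rintro ⟨h1, h2⟩ <;> simp_all
  rw [h, card_product, rSub, sq]

lemma E4_eq_card (B : Finset G) :
    E4 B B = (((B ×ˢ B) ×ˢ (B ×ˢ B) ×ˢ (B ×ˢ B) ×ˢ (B ×ˢ B)).filter fun p =>
      p.1.1 - p.1.2 = p.2.1.1 - p.2.1.2 ∧
      p.1.1 - p.1.2 = p.2.2.1.1 - p.2.2.1.2 ∧
      p.1.1 - p.1.2 = p.2.2.2.1 - p.2.2.2.2).card := by
  rw [E4, Finset.card_eq_sum_card_fiberwise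
    (f := fun p : (G × G) × (G × G) × (G × G) × (G × G) => p.1.1 - p.1.2)
    (t := B - B) (fun p hp => by
      simp only [mem_filter, mem_product, mem_coe] at hp
      exact sub_mem_sub hp.1.1.1 hp.1.1.2)]
  refine sum_congr rfl fun x hx => ?_
  rw [filter_filter]
  have h : (((B ×ˢ B) ×ˢ (B ×ˢ B) ×ˢ (B ×ˢ B) ×ˢ (B ×ˢ B)).filter fun p =>
      (p.1.1 - p.1.2 = p.2.1.1 - p.2.1.2 ∧
       p.1.1 - p.1.2 = p.2.2.1.1 - p.2.2.1.2 ∧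
       p.1.1 - p.1.2 = p.2.2.2.1 - p.2.2.2.2) ∧ p.1.1 - p.1.2 = x)
      = ((B ×ˢ B).filter fun ab => ab.1 - ab.2 = x) ×ˢ
        ((B ×ˢ B).filter fun ab => ab.1 - ab.2 = x) ×ˢ
        ((B ×ˢ B).filter fun ab => ab.1 - ab.2 = x) ×ˢ
        ((B ×ˢ B).filter fun ab => ab.1 - ab.2 = x) := by
    rw [← filter_product, ← filter_product, ← filter_product]
    refine filter_congr fun p _ => ?_
    constructor
    · rintro ⟨⟨h1, h2, h3⟩, h4⟩
      exact ⟨h4, h1 ▸ h4, h2 ▸ h4, h3 ▸ h4⟩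
    · rintro ⟨h1, h2, h3, h4⟩
      exact ⟨⟨h1.trans h2.symm, h1.trans h3.symm, h1.trans h4.symm⟩, h1⟩
  rw [h, card_product, card_product, card_product, rSub]
  ring

/-- `|quad P| ≤ E2 P P`. -/
lemma quad_card_le (P : Finset G) : (quad P).card ≤ E2 P P := by
  rw [E2_eq_card]
  apply Finset.card_le_card_of_injOn (fun q => ((q.1, q.2.1), (q.2.2.2, q.2.2.1)))
  · intro q hq
    rw [mem_coe, mem_quad] at hq
    rw [mem_coe]
    refine mem_filter.mpr ⟨mem_product.mpr ⟨mem_product.mpr ⟨hq.1.1, hq.1.2.1⟩,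
      mem_product.mpr ⟨hq.1.2.2.2, hq.1.2.2.1⟩⟩, hq.2⟩
  · rintro ⟨a, b, c, d⟩ - ⟨a', b', c', d'⟩ - h
    simp only [Prod.mk.injEq] at h
    obtain ⟨⟨e1, e2⟩, e3, e4⟩ := h
    simp [e1, e2, e3, e4]

/-- `∑ q ∈ quad P, |fib A q| = ` a cardinality. -/
lemma sum_fib_eq (A P : Finset G) :
    ∑ q ∈ quad P, (fib A q).card
      = ((quad P ×ˢ A).filter fun qa => qa.2 ∈ fib A qa.1).card := by
  rw [Finset.card_filter, Finset.sum_product]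
  refine sum_congr rfl fun q _ => ?_
  rw [← Finset.card_filter]
  congr 1
  ext x
  simp only [mem_filter, mem_fib]
  tauto

lemma sum_fib_sq_eq (A P : Finset G) :
    ∑ q ∈ quad P, (fib A q).card ^ 2
      = ((quad P ×ˢ (A ×ˢ A)).filter fun p =>
          p.2.1 ∈ fib A p.1 ∧ p.2.2 ∈ fib A p.1).card := by
  rw [Finset.card_filter, Finset.sum_product]
  refine sum_congr rfl fun q _ => ?_
  rw [← Finset.card_filter]
  have h : ((A ×ˢ A).filter fun xx : G × G => xx.1 ∈ fib A q ∧ xx.2 ∈ fib A q)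
      = (A.filter fun x => x ∈ fib A q) ×ˢ (A.filter fun x => x ∈ fib A q) := by
    rw [← filter_product]
  have h2 : A.filter (fun x => x ∈ fib A q) = fib A q := by
    ext x
    simp only [mem_filter, mem_fib]
    tauto
  rw [h, h2, card_product, sq]

end Aux

/-- **Trace bound:** for finite `A, P ⊆ G`,
`(Σ_{x,y,z,w ∈ A} 1_P(x+y) 1_P(y+z) 1_P(z+w) 1_P(w+x))^2 ≤ E^+(P) · E_4^+(A)`. -/
theorem trace_pow_two_le_energy {G : Type*} [AddCommGroup G] [DecidableEq G]
    (A P : Finset G) :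
    (∑ x ∈ A, ∑ y ∈ A, ∑ z ∈ A, ∑ w ∈ A,
        (if x + y ∈ P then 1 else 0) * (if y + z ∈ P then 1 else 0) *
          (if z + w ∈ P then 1 else 0) * (if w + x ∈ P then 1 else 0)) ^ 2 ≤
      E2 P P * E4 A A := by
  classical
  -- Step 0: the LHS sum as a cardinality.
  have hS : (∑ x ∈ A, ∑ y ∈ A, ∑ z ∈ A, ∑ w ∈ A,
        (if x + y ∈ P then 1 else 0) * (if y + z ∈ P then 1 else 0) *
          (if z + w ∈ P then 1 else 0) * (if w + x ∈ P then 1 else 0))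
      = ((A ×ˢ A ×ˢ A ×ˢ A).filter fun t => t.1 + t.2.1 ∈ P ∧ t.2.1 + t.2.2.1 ∈ P ∧
          t.2.2.1 + t.2.2.2 ∈ P ∧ t.2.2.2 + t.1 ∈ P).card := by
    rw [Finset.card_filter]
    simp only [Finset.sum_product]
    exact sum_congr rfl fun x _ => sum_congr rfl fun y _ => sum_congr rfl fun z _ =>
      sum_congr rfl fun w _ => ite_mul_four
  -- Step 1: the LHS count is at most `∑ q ∈ quad P, |fib A q|`.
  have h1 : ((A ×ˢ A ×ˢ A ×ˢ A).filter fun t => t.1 + t.2.1 ∈ P ∧ t.2.1 + t.2.2.1 ∈ P ∧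
      t.2.2.1 + t.2.2.2 ∈ P ∧ t.2.2.2 + t.1 ∈ P).card ≤ ∑ q ∈ quad P, (fib A q).card := by
    rw [sum_fib_eq]
    apply Finset.card_le_card_of_injOn
      (fun t => ((t.1 + t.2.1, t.2.1 + t.2.2.1, t.2.2.1 + t.2.2.2, t.2.2.2 + t.1), t.1))
    · rintro ⟨x, y, z, w⟩ ht
      simp only [mem_filter, mem_product, mem_coe] at ht
      obtain ⟨⟨hx, hy, hz, hw⟩, c1, c2, c3, c4⟩ := ht
      refine mem_filter.mpr ⟨mem_product.mpr ⟨?_, hx⟩, ?_⟩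
      · refine mem_quad.mpr ⟨⟨c1, c2, c3, c4⟩, ?_⟩
        show x + y - (y + z) = w + x - (z + w)
        abel
      · refine mem_fib.mpr ⟨hx, ?_, ?_, ?_⟩
        · show x + y - x ∈ A
          have h : x + y - x = y := by abel
          rw [h]; exact hy
        · show x - (x + y - (y + z)) ∈ A
          have h : x - (x + y - (y + z)) = z := by abel
          rw [h]; exact hz
        · show w + x - x ∈ A
          have h : w + x - x = w := by abel
          rw [h]; exact hw
    · rintro ⟨x, y, z, w⟩ - ⟨x', y', z', w'⟩ - h
      simp only [Prod.mk.injEq] at h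
      obtain ⟨⟨h1, h2, h3, h4⟩, h5⟩ := h
      subst h5
      obtain rfl : y = y' := add_left_cancel h1
      obtain rfl : z = z' := add_left_cancel h2
      obtain rfl : w = w' := add_left_cancel h3
      rfl
  -- Step 2: Cauchy–Schwarz.
  have h2 : (∑ q ∈ quad P, (fib A q).card) ^ 2
      ≤ (quad P).card * ∑ q ∈ quad P, (fib A q).card ^ 2 := by
    simpa using Finset.sum_mul_sq_le_sq_mul_sq (R := ℕ) (quad P) 1
      (fun q => (fib A q).card)
  -- Step 4: `∑ q ∈ quad P, |fib A q| ^ 2 ≤ E4 A A`.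
  have h4 : ∑ q ∈ quad P, (fib A q).card ^ 2 ≤ E4 A A := by
    rw [sum_fib_sq_eq, E4_eq_card]
    apply Finset.card_le_card_of_injOn (fun p =>
      ((p.2.1, p.2.2), (p.1.1 - p.2.2, p.1.1 - p.2.1),
        (p.2.1 - (p.1.1 - p.1.2.1), p.2.2 - (p.1.1 - p.1.2.1)),
        (p.1.2.2.2 - p.2.2, p.1.2.2.2 - p.2.1)))
    · rintro ⟨⟨q1, q2, q3, q4⟩, x, x'⟩ hp
      simp only [mem_filter, mem_product, mem_fib, mem_coe] at hp
      obtain ⟨⟨hq, hx, hx'⟩, ⟨-, m1, m2, m3⟩, -, m4, m5, m6⟩ := hp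
      refine mem_filter.mpr ⟨mem_product.mpr ⟨mem_product.mpr ⟨hx, hx'⟩,
        mem_product.mpr ⟨mem_product.mpr ⟨m4, m1⟩,
          mem_product.mpr ⟨mem_product.mpr ⟨m2, m5⟩, mem_product.mpr ⟨m6, m3⟩⟩⟩⟩, ?_, ?_, ?_⟩
      · show x - x' = q1 - x' - (q1 - x); abel
      · show x - x' = x - (q1 - q2) - (x' - (q1 - q2)); abel
      · show x - x' = q4 - x' - (q4 - x); abel
    · rintro ⟨⟨q1, q2, q3, q4⟩, x, x'⟩ ha ⟨⟨q1', q2', q3', q4'⟩, y, y'⟩ hb h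
      have hda := (mem_quad.mp (mem_product.mp (mem_filter.mp ha).1).1).2
      have hdb := (mem_quad.mp (mem_product.mp (mem_filter.mp hb).1).1).2
      simp only [Prod.mk.injEq] at h
      obtain ⟨⟨e1, e2⟩, ⟨e3, e4⟩, ⟨e5, e6⟩, e7, e8⟩ := h
      subst e1; subst e2
      obtain rfl : q1 = q1' := sub_left_injective e4
      obtain rfl : q4 = q4' := sub_left_injective e8
      obtain rfl : q2 = q2' := by
        have hd : q1 - q2 = q1 - q2' := sub_right_injective e5
        exact sub_right_injective hd
      obtain rfl : q3 = q3' := by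
        have : q4 - q3 = q4 - q3' := by rw [← hda, ← hdb]
        exact sub_right_injective this
      rfl
  calc (∑ x ∈ A, ∑ y ∈ A, ∑ z ∈ A, ∑ w ∈ A,
        (if x + y ∈ P then 1 else 0) * (if y + z ∈ P then 1 else 0) *
          (if z + w ∈ P then 1 else 0) * (if w + x ∈ P then 1 else 0)) ^ 2
      ≤ (∑ q ∈ quad P, (fib A q).card) ^ 2 := by
        rw [hS]; exact Nat.pow_le_pow_left h1 2
    _ ≤ (quad P).card * ∑ q ∈ quad P, (fib A q).card ^ 2 := h2
    _ ≤ E2 P P * E4 A A := Nat.mul_le_mul (quad_card_le P) h4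
end

section
/- Let G be an abelian group, let A ⊆ G be a finite nonempty set, and let d ≥ 1 be a real number such that E_4^+(A, B) ≤ d · |A| · |B|^3 for every nonempty finite set B ⊆ G. Then |A|^4 ≤ d · E^+(A − A). -/
open Finset
open scoped Pointwise

namespace AuxEnergy

variable {G : Type*} [AddCommGroup G] [DecidableEq G]

lemma rSub_eq_zero_of_not_mem {A B : Finset G} {x : G} (h : x ∉ A - B) : rSub A B x = 0 := by
  rw [rSub, card_eq_zero, filter_eq_empty_iff]
  rintro ⟨a, b⟩ hab h'
  rw [mem_product] at hab
  exact h (h' ▸ sub_mem_sub hab.1 hab.2)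

lemma sum_rSub (A B : Finset G) : ∑ x ∈ A - B, rSub A B x = A.card * B.card := by
  rw [← card_product]
  exact (card_eq_sum_card_fiberwise (f := fun (ab : G × G) => ab.1 - ab.2) (s := A ×ˢ B)
    (t := A - B) (fun ab hab => by
      rw [mem_coe, mem_product] at hab; exact sub_mem_sub hab.1 hab.2)).symm

/-- the slice `A_p = {b ∈ A : b + p ∈ A}` -/
def slc (A : Finset G) (p : G) : Finset G := A.filter fun b => b + p ∈ A

lemma slc_subset (A : Finset G) (p : G) : slc A p ⊆ A := filter_subset _ _

lemma card_slc (A : Finset G) (p : G) : (slc A p).card = rSub A A p := by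
  rw [rSub]
  apply card_bij' (i := fun b _ => ((b + p, b) : G × G)) (j := fun ab _ => ab.2)
  · intro b hb
    simp only [slc, mem_filter] at hb
    simp only [mem_filter, mem_product]
    exact ⟨⟨hb.2, hb.1⟩, by abel⟩
  · intro ab hab
    simp only [mem_filter, mem_product] at hab
    simp only [slc, mem_filter]
    refine ⟨hab.1.2, ?_⟩
    have h2 : ab.2 + (ab.1 - ab.2) = ab.1 := by abel
    rw [hab.2] at h2
    rw [h2]
    exact hab.1.1
  · intro b hb; rfl
  · intro ab hab
    simp only [mem_filter, mem_product] at hab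
    have h2 : ab.2 + (ab.1 - ab.2) = ab.1 := by abel
    rw [hab.2] at h2
    exact Prod.ext h2 rfl

/-- step 5: `|A_p − A_q| ≤ r_{D−D}(p−q)` -/
lemma card_slc_sub_le (A : Finset G) (p q : G) :
    (slc A p - slc A q).card ≤ rSub (A - A) (A - A) (p - q) := by
  rw [rSub]
  apply card_le_card_of_injOn (f := fun v => ((v + (p - q), v) : G × G))
  · intro v hv
    rw [mem_coe, mem_sub] at hv
    obtain ⟨γ, hγ, β, hβ, rfl⟩ := hv
    simp only [slc, mem_filter] at hγ hβ
    simp only [mem_coe, mem_filter, mem_product]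
    refine ⟨⟨?_, sub_mem_sub hγ.1 hβ.1⟩, by abel⟩
    have h : γ - β + (p - q) = (γ + p) - (β + q) := by abel
    rw [h]
    exact sub_mem_sub hγ.2 hβ.2
  · intro v₁ _ v₂ _ h
    exact congrArg Prod.snd h

/-- `∑_{(p,q) ∈ D×D} r_{D−D}(p−q) = E2 D D` -/
lemma sum_pairs_rDD (D : Finset G) :
    ∑ pq ∈ D ×ˢ D, rSub D D (pq.1 - pq.2) = E2 D D := by
  rw [E2, ← sum_fiberwise_of_maps_to (g := fun (pq : G × G) => pq.1 - pq.2) (t := D - D)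
      (fun pq hpq => by rw [mem_product] at hpq; exact sub_mem_sub hpq.1 hpq.2)]
  refine sum_congr rfl fun y hy => ?_
  rw [sum_congr rfl (fun pq hpq => by rw [(mem_filter.mp hpq).2]), sum_const, smul_eq_mul, sq]
  congr 1

/-- (I-a): `E2 X Y = ∑_{u ∈ X−X} r_{X−X}(u) · r_{Y−Y}(u)` -/
lemma E2_eq_corr (X Y : Finset G) :
    E2 X Y = ∑ u ∈ X - X, rSub X X u * rSub Y Y u := by
  classical
  have hP : (((X ×ˢ Y) ×ˢ (X ×ˢ Y)).filter
      (fun t => t.1.1 - t.1.2 = t.2.1 - t.2.2)).card = E2 X Y := by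
    rw [E2, card_eq_sum_card_fiberwise (f := fun (t : (G × G) × (G × G)) => t.1.1 - t.1.2)
      (t := X - Y) (fun t ht => by
        have h1 := (mem_product.mp (mem_filter.mp ht).1).1
        rw [mem_product] at h1
        exact sub_mem_sub h1.1 h1.2)]
    refine sum_congr rfl fun v hv => ?_
    have hfib : (((X ×ˢ Y) ×ˢ (X ×ˢ Y)).filter
        (fun t => t.1.1 - t.1.2 = t.2.1 - t.2.2)).filter
          (fun t => t.1.1 - t.1.2 = v)
        = ((X ×ˢ Y).filter (fun ab => ab.1 - ab.2 = v)) ×ˢ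
          ((X ×ˢ Y).filter (fun ab => ab.1 - ab.2 = v)) := by
      ext t
      simp only [mem_filter, mem_product]
      constructor
      · rintro ⟨⟨⟨hm1, hm2⟩, heq⟩, hv1⟩
        exact ⟨⟨hm1, hv1⟩, ⟨hm2, heq ▸ hv1⟩⟩
      · rintro ⟨⟨hm1, hv1⟩, ⟨hm2, hv2⟩⟩
        exact ⟨⟨⟨hm1, hm2⟩, hv1.trans hv2.symm⟩, hv1⟩
    rw [hfib, card_product, rSub, sq]
  have hQ : (((X ×ˢ X) ×ˢ (Y ×ˢ Y)).filter
      (fun t => t.1.1 - t.1.2 = t.2.1 - t.2.2)).card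
      = ∑ u ∈ X - X, rSub X X u * rSub Y Y u := by
    rw [card_eq_sum_card_fiberwise (f := fun (t : (G × G) × (G × G)) => t.1.1 - t.1.2)
      (t := X - X) (fun t ht => by
        have h1 := (mem_product.mp (mem_filter.mp ht).1).1
        rw [mem_product] at h1
        exact sub_mem_sub h1.1 h1.2)]
    refine sum_congr rfl fun u hu => ?_
    have hfib : (((X ×ˢ X) ×ˢ (Y ×ˢ Y)).filter
        (fun t => t.1.1 - t.1.2 = t.2.1 - t.2.2)).filter
          (fun t => t.1.1 - t.1.2 = u)
        = ((X ×ˢ X).filter (fun ab => ab.1 - ab.2 = u)) ×ˢ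
          ((Y ×ˢ Y).filter (fun ab => ab.1 - ab.2 = u)) := by
      ext t
      simp only [mem_filter, mem_product]
      constructor
      · rintro ⟨⟨⟨hm1, hm2⟩, heq⟩, hv1⟩
        exact ⟨⟨hm1, hv1⟩, ⟨hm2, heq ▸ hv1⟩⟩
      · rintro ⟨⟨hm1, hv1⟩, ⟨hm2, hv2⟩⟩
        exact ⟨⟨⟨hm1, hm2⟩, hv1.trans hv2.symm⟩, hv1⟩
    rw [hfib, card_product, rSub, rSub]
  have hPQ : (((X ×ˢ Y) ×ˢ (X ×ˢ Y)).filter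
      (fun t => t.1.1 - t.1.2 = t.2.1 - t.2.2)).card
      = (((X ×ˢ X) ×ˢ (Y ×ˢ Y)).filter
      (fun t => t.1.1 - t.1.2 = t.2.1 - t.2.2)).card := by
    apply card_bij' (i := fun t _ => (((t.1.1, t.2.1), (t.1.2, t.2.2)) : (G × G) × (G × G)))
      (j := fun t _ => (((t.1.1, t.2.1), (t.1.2, t.2.2)) : (G × G) × (G × G)))
    · rintro ⟨⟨a, b⟩, ⟨c, e⟩⟩ ht
      simp only [mem_filter, mem_product] at ht ⊢
      obtain ⟨⟨⟨ha, hb⟩, ⟨hc, he⟩⟩, heq⟩ := ht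
      exact ⟨⟨⟨ha, hc⟩, ⟨hb, he⟩⟩, sub_eq_sub_iff_sub_eq_sub.mp heq⟩
    · rintro ⟨⟨a, c⟩, ⟨b, e⟩⟩ ht
      simp only [mem_filter, mem_product] at ht ⊢
      obtain ⟨⟨⟨ha, hc⟩, ⟨hb, he⟩⟩, heq⟩ := ht
      exact ⟨⟨⟨ha, hb⟩, ⟨hc, he⟩⟩, sub_eq_sub_iff_sub_eq_sub.mpr heq⟩
    · rintro ⟨⟨a, b⟩, ⟨c, e⟩⟩ _; rfl
    · rintro ⟨⟨a, c⟩, ⟨b, e⟩⟩ _; rfl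
  rw [← hP, hPQ, hQ]

/-- (I-b): `∑_{p ∈ A−A} r_{A_p−A_p}(u) = r_{A−A}(u)²` -/
lemma sum_slc_corr (A : Finset G) (u : G) :
    ∑ p ∈ A - A, rSub (slc A p) (slc A p) u = rSub A A u ^ 2 := by
  classical
  set T := ((A - A) ×ˢ (A ×ˢ A)).filter
    (fun t => (t.2.1 + t.1 ∈ A ∧ t.2.2 + t.1 ∈ A) ∧ t.2.1 - t.2.2 = u) with hT
  have h1 : T.card = ∑ p ∈ A - A, rSub (slc A p) (slc A p) u := by
    rw [card_eq_sum_card_fiberwise (f := fun (t : G × (G × G)) => t.1) (t := A - A)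
      (fun t ht => (mem_product.mp (mem_filter.mp ht).1).1)]
    refine sum_congr rfl fun p hp => ?_
    rw [rSub]
    apply card_bij' (i := fun t _ => t.2) (j := fun gb _ => ((p, gb) : G × (G × G)))
    · rintro ⟨p', ⟨γ, β⟩⟩ ht
      simp only [hT, mem_filter, mem_product] at ht
      obtain ⟨⟨⟨hp', hγ, hβ⟩, ⟨hγp, hβp⟩, hd⟩, hpp⟩ := ht
      subst hpp
      simp only [mem_filter, mem_product, slc]
      exact ⟨⟨⟨hγ, hγp⟩, ⟨hβ, hβp⟩⟩, hd⟩
    · rintro ⟨γ, β⟩ hgb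
      simp only [mem_filter, mem_product, slc] at hgb
      obtain ⟨⟨⟨hγ, hγp⟩, ⟨hβ, hβp⟩⟩, hd⟩ := hgb
      refine mem_filter.mpr ⟨?_, rfl⟩
      simp only [hT, mem_filter, mem_product]
      exact ⟨⟨hp, hγ, hβ⟩, ⟨hγp, hβp⟩, hd⟩
    · rintro ⟨p', gb⟩ ht
      obtain ⟨-, h⟩ := mem_filter.mp ht
      exact Prod.ext h.symm rfl
    · rintro ⟨γ, β⟩ _; rfl
  have h2 : T.card = (((A ×ˢ A).filter (fun ab => ab.1 - ab.2 = u)) ×ˢ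
      ((A ×ˢ A).filter (fun ab => ab.1 - ab.2 = u))).card := by
    apply card_bij' (i := fun t _ => (((t.2.1 + t.1, t.2.2 + t.1), t.2) : (G × G) × (G × G)))
      (j := fun ab _ => ((ab.1.1 - ab.2.1, ab.2) : G × (G × G)))
    · rintro ⟨p, ⟨γ, β⟩⟩ ht
      simp only [hT, mem_filter, mem_product] at ht
      obtain ⟨⟨hp, hγ, hβ⟩, ⟨hγp, hβp⟩, hd⟩ := ht
      simp only [mem_filter, mem_product]
      refine ⟨⟨⟨hγp, hβp⟩, ?_⟩, ⟨⟨hγ, hβ⟩, hd⟩⟩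
      have : γ + p - (β + p) = γ - β := by abel
      rw [this]; exact hd
    · rintro ⟨⟨a, b⟩, ⟨c, e⟩⟩ hab
      simp only [mem_filter, mem_product] at hab
      obtain ⟨⟨⟨ha, hb⟩, hab1⟩, ⟨⟨hc, he⟩, hce⟩⟩ := hab
      have hbe : a - c = b - e := sub_eq_sub_iff_sub_eq_sub.mp (hab1.trans hce.symm)
      simp only [hT, mem_filter, mem_product]
      refine ⟨⟨sub_mem_sub ha hc, hc, he⟩, ⟨?_, ?_⟩, hce⟩
      · have : c + (a - c) = a := by abel
        rw [this]; exact ha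
      · have : e + (a - c) = b := by rw [hbe]; abel
        rw [this]; exact hb
    · rintro ⟨p, ⟨γ, β⟩⟩ ht
      have : γ + p - γ = p := by abel
      simp only [this]
    · rintro ⟨⟨a, b⟩, ⟨c, e⟩⟩ hab
      simp only [mem_filter, mem_product] at hab
      obtain ⟨⟨⟨ha, hb⟩, hab1⟩, ⟨⟨hc, he⟩, hce⟩⟩ := hab
      have hbe : a - c = b - e := sub_eq_sub_iff_sub_eq_sub.mp (hab1.trans hce.symm)
      have h1 : c + (a - c) = a := by abel
      have h2 : e + (a - c) = b := by rw [hbe]; abel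
      simp only [h1, h2]
  rw [← h1, h2, card_product, rSub, sq]

/-- The key per-pair inequality: `(r(p)r(q))² ≤ r_{D−D}(p−q) · E2(A_p, A_q)`. -/
lemma key_pair (A : Finset G) (p q : G) :
    (rSub A A p * rSub A A q) ^ 2
      ≤ rSub (A - A) (A - A) (p - q) * E2 (slc A p) (slc A q) := by
  have h1 : rSub A A p * rSub A A q
      = ∑ v ∈ slc A p - slc A q, rSub (slc A p) (slc A q) v := by
    rw [sum_rSub, card_slc, card_slc]
  have h2 : (∑ v ∈ slc A p - slc A q, rSub (slc A p) (slc A q) v) ^ 2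
      ≤ (slc A p - slc A q).card
        * ∑ v ∈ slc A p - slc A q, (rSub (slc A p) (slc A q) v) ^ 2 :=
    sq_sum_le_card_mul_sum_sq
  calc (rSub A A p * rSub A A q) ^ 2
      = (∑ v ∈ slc A p - slc A q, rSub (slc A p) (slc A q) v) ^ 2 := by rw [h1]
    _ ≤ (slc A p - slc A q).card
        * ∑ v ∈ slc A p - slc A q, (rSub (slc A p) (slc A q) v) ^ 2 := h2
    _ ≤ rSub (A - A) (A - A) (p - q) * E2 (slc A p) (slc A q) :=
        mul_le_mul_left (card_slc_sub_le A p q) _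

/-- summing the weights recovers the fourth energy:
`∑_{(p,q) ∈ D×D} E2(A_p,A_q) = E4(A,A)`. -/
lemma sum_pairs_w (A : Finset G) :
    ∑ pq ∈ (A - A) ×ˢ (A - A), E2 (slc A pq.1) (slc A pq.2) = E4 A A := by
  have step : ∀ p q : G, E2 (slc A p) (slc A q)
      = ∑ u ∈ A - A, rSub (slc A p) (slc A p) u * rSub (slc A q) (slc A q) u := by
    intro p q
    rw [E2_eq_corr]
    apply sum_subset (sub_subset_sub (slc_subset A p) (slc_subset A p))
    intro u _ hu
    rw [rSub_eq_zero_of_not_mem hu, zero_mul]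
  calc ∑ pq ∈ (A - A) ×ˢ (A - A), E2 (slc A pq.1) (slc A pq.2)
      = ∑ p ∈ A - A, ∑ q ∈ A - A, ∑ u ∈ A - A,
          rSub (slc A p) (slc A p) u * rSub (slc A q) (slc A q) u := by
        rw [sum_product]
        exact sum_congr rfl fun p _ => sum_congr rfl fun q _ => step p q
    _ = ∑ u ∈ A - A, (∑ p ∈ A - A, rSub (slc A p) (slc A p) u) *
          (∑ q ∈ A - A, rSub (slc A q) (slc A q) u) := by
        have hstep : ∀ p ∈ A - A, ∑ q ∈ A - A, ∑ u ∈ A - A,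
            rSub (slc A p) (slc A p) u * rSub (slc A q) (slc A q) u
            = ∑ u ∈ A - A, rSub (slc A p) (slc A p) u
                * ∑ q ∈ A - A, rSub (slc A q) (slc A q) u := by
          intro p _
          rw [sum_comm]
          exact sum_congr rfl fun u _ => (mul_sum _ _ _).symm
        rw [sum_congr rfl hstep, sum_comm]
        exact sum_congr rfl fun u _ => (sum_mul _ _ _).symm
    _ = E4 A A := by
        rw [E4]
        refine sum_congr rfl fun u _ => ?_
        rw [sum_slc_corr]
        ring

end AuxEnergy

/-- If `E_4^+(A,B) ≤ d |A| |B|^3` for all nonempty `B` (i.e. `d_4^+(A) ≤ d`), then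
`|A|^4 ≤ d · E^+(A − A)`. -/
theorem card_pow_four_le_energy_of_diffset
    {G : Type*} [AddCommGroup G] [DecidableEq G] (A : Finset G) (d : ℝ)
    (hA : A.Nonempty) (hd : 1 ≤ d)
    (hd4 : ∀ B : Finset G, B.Nonempty →
      (E4 A B : ℝ) ≤ d * (A.card : ℝ) * (B.card : ℝ) ^ (3 : ℕ)) :
    (A.card : ℝ) ^ (4 : ℕ) ≤ d * (E2 (A - A) (A - A) : ℝ) := by
  classical
  open AuxEnergy in
  set D := A - A with hD
  set n := A.card with hn
  have id1 : ∑ pq ∈ D ×ˢ D, (rSub A A pq.1 * rSub A A pq.2) = n ^ 4 := by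
    rw [sum_product, ← Finset.sum_mul_sum, hD, sum_rSub]
    ring
  have key : ∀ pq ∈ D ×ˢ D, ((rSub A A pq.1 * rSub A A pq.2 : ℕ) : ℝ)
      ≤ Real.sqrt (rSub D D (pq.1 - pq.2)) *
        Real.sqrt (E2 (slc A pq.1) (slc A pq.2)) := by
    intro pq _
    rw [← Real.sqrt_mul (by positivity)]
    rw [Real.le_sqrt (by positivity) (by positivity)]
    have hk := key_pair A pq.1 pq.2
    calc ((rSub A A pq.1 * rSub A A pq.2 : ℕ) : ℝ) ^ 2
        = (((rSub A A pq.1 * rSub A A pq.2) ^ 2 : ℕ) : ℝ) := by push_cast; ring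
      _ ≤ ((rSub (A - A) (A - A) (pq.1 - pq.2) * E2 (slc A pq.1) (slc A pq.2) : ℕ) : ℝ) := by
          exact_mod_cast hk
      _ = _ := by push_cast; rw [hD]
  have hCS : ((n : ℝ) ^ 4) ≤ Real.sqrt (E2 D D) * Real.sqrt (E4 A A) := by
    have h0 : ((n : ℝ) ^ 4) = ∑ pq ∈ D ×ˢ D, ((rSub A A pq.1 * rSub A A pq.2 : ℕ) : ℝ) := by
      rw [← Nat.cast_sum, id1]; push_cast; ring
    rw [h0]
    calc ∑ pq ∈ D ×ˢ D, ((rSub A A pq.1 * rSub A A pq.2 : ℕ) : ℝ)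
        ≤ ∑ pq ∈ D ×ˢ D, Real.sqrt (rSub D D (pq.1 - pq.2)) *
            Real.sqrt (E2 (slc A pq.1) (slc A pq.2)) := sum_le_sum key
      _ ≤ Real.sqrt (∑ pq ∈ D ×ˢ D, (rSub D D (pq.1 - pq.2) : ℝ)) *
          Real.sqrt (∑ pq ∈ D ×ˢ D, (E2 (slc A pq.1) (slc A pq.2) : ℝ)) := by
          have h := Finset.sum_mul_sq_le_sq_mul_sq (D ×ˢ D)
            (fun pq => Real.sqrt (rSub D D (pq.1 - pq.2)))
            (fun pq => Real.sqrt (E2 (slc A pq.1) (slc A pq.2)))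
          have e1 : ∑ pq ∈ D ×ˢ D, (Real.sqrt (rSub D D (pq.1 - pq.2))) ^ 2
              = ∑ pq ∈ D ×ˢ D, (rSub D D (pq.1 - pq.2) : ℝ) :=
            sum_congr rfl fun pq _ => Real.sq_sqrt (Nat.cast_nonneg _)
          have e2 : ∑ pq ∈ D ×ˢ D, (Real.sqrt (E2 (slc A pq.1) (slc A pq.2))) ^ 2
              = ∑ pq ∈ D ×ˢ D, (E2 (slc A pq.1) (slc A pq.2) : ℝ) :=
            sum_congr rfl fun pq _ => Real.sq_sqrt (Nat.cast_nonneg _)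
          rw [e1, e2] at h
          have hnn : (0:ℝ) ≤ ∑ pq ∈ D ×ˢ D, Real.sqrt (rSub D D (pq.1 - pq.2)) *
              Real.sqrt (E2 (slc A pq.1) (slc A pq.2)) :=
            sum_nonneg fun pq _ => by positivity
          have h2 : ∑ pq ∈ D ×ˢ D, Real.sqrt (rSub D D (pq.1 - pq.2)) *
              Real.sqrt (E2 (slc A pq.1) (slc A pq.2))
              ≤ Real.sqrt ((∑ pq ∈ D ×ˢ D, (rSub D D (pq.1 - pq.2) : ℝ)) *
                (∑ pq ∈ D ×ˢ D, (E2 (slc A pq.1) (slc A pq.2) : ℝ))) := by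
            rw [Real.le_sqrt hnn (by positivity)]
            exact h
          rwa [Real.sqrt_mul (by positivity)] at h2
      _ = Real.sqrt (E2 D D) * Real.sqrt (E4 A A) := by
          rw [← Nat.cast_sum, ← Nat.cast_sum, sum_pairs_rDD, hD, sum_pairs_w]
  have hn1 : 1 ≤ n := hA.card_pos
  have hnR : (0:ℝ) < (n:ℝ)^4 := by positivity
  have hE4 : (E4 A A : ℝ) ≤ d * n * (n:ℝ) ^ 3 := hd4 A hA
  have h8 : ((n:ℝ)^4)^2 ≤ (E2 D D : ℝ) * (E4 A A : ℝ) := by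
    calc ((n:ℝ)^4)^2 ≤ (Real.sqrt (E2 D D) * Real.sqrt (E4 A A))^2 := by
          apply pow_le_pow_left₀ (by positivity) hCS 2
      _ = (E2 D D : ℝ) * (E4 A A : ℝ) := by
          rw [mul_pow, Real.sq_sqrt (by positivity), Real.sq_sqrt (by positivity)]
  have h9 : ((n:ℝ)^4)^2 ≤ (d * (E2 D D : ℝ)) * (n:ℝ)^4 := by
    calc ((n:ℝ)^4)^2 ≤ (E2 D D : ℝ) * (E4 A A : ℝ) := h8
      _ ≤ (E2 D D : ℝ) * (d * n * (n:ℝ)^3) := by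
          apply mul_le_mul_of_nonneg_left hE4 (by positivity)
      _ = (d * (E2 D D : ℝ)) * (n:ℝ)^4 := by ring
  have h10 : (n:ℝ)^4 * (n:ℝ)^4 ≤ (d * (E2 D D : ℝ)) * (n:ℝ)^4 := by
    calc (n:ℝ)^4 * (n:ℝ)^4 = ((n:ℝ)^4)^2 := by ring
      _ ≤ _ := h9
  exact le_of_mul_le_mul_right h10 hnR
end
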